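/- arXiv:2002.04870 — 11 statements merged into one kernel-verified Lean document; each statement's English description precedes it below -/
import Mathlib

section
/- Let n, λ, B, s, t be positive integers with λ ≤ n and t ≤ s. Let 𝓑 be a family of exactly s subsets of {1,…,n}, each of cardinality at most B. Suppose that for every Q ⊆ {1,…,n} with |Q| = λ there exists a subfamily 𝓒 ⊆ 𝓑 with |𝓒| ≤ t such that 2·|Q ∩ ⋃𝓒| ≥ λ. Then C(n,λ) ≤ C(s,t) · C(t·B, ⌈λ/2⌉) · C(n, ⌊λ/2⌋), where C(·,·) denotes the binomial coefficient. -/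
/-- counting inequality for the relaxed λ-set workload. -/
theorem relaxed_set_workload_counting
    (n lam B s t : ℕ) (hn : 0 < n) (hlam : 0 < lam) (hB : 0 < B)
    (hs : 0 < s) (ht : 0 < t) (hln : lam ≤ n) (hts : t ≤ s)
    (𝓑 : Finset (Finset (Fin n))) (hcard : 𝓑.card = s)
    (hblocks : ∀ b ∈ 𝓑, b.card ≤ B)
    (hwork : ∀ Q : Finset (Fin n), Q.card = lam →
      ∃ 𝓒 ⊆ 𝓑, 𝓒.card ≤ t ∧ lam ≤ 2 * (Q ∩ 𝓒.sup id).card) :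
    Nat.choose n lam ≤
      Nat.choose s t * Nat.choose (t * B) ((lam + 1) / 2) * Nat.choose n (lam / 2) := by
  classical
  set c1 := (lam + 1) / 2 with hc1
  set c2 := lam / 2 with hc2
  set T : Finset ((_ : Finset (Finset (Fin n))) × Finset (Fin n) × Finset (Fin n)) :=
    (𝓑.powersetCard t).sigma
      (fun 𝓒 => ((𝓒.sup id).powersetCard c1) ×ˢ ((Finset.univ : Finset (Fin n)).powersetCard c2))
    with hT
  have hsurj : Set.SurjOn
      (fun p : (_ : Finset (Finset (Fin n))) × Finset (Fin n) × Finset (Fin n) => p.2.1 ∪ p.2.2)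
      ↑T ↑((Finset.univ : Finset (Fin n)).powersetCard lam) := by
    intro Q hQ
    simp only [Finset.mem_coe, Finset.mem_powersetCard] at hQ
    obtain ⟨-, hQcard⟩ := hQ
    obtain ⟨𝓒', h𝓒'sub, h𝓒'card, hcov⟩ := hwork Q hQcard
    obtain ⟨𝓒, hsub1, hsub2, h𝓒card⟩ :=
      Finset.exists_subsuperset_card_eq h𝓒'sub h𝓒'card (by rw [hcard]; exact hts)
    have hmono : Q ∩ 𝓒'.sup id ⊆ Q ∩ 𝓒.sup id :=
      Finset.inter_subset_inter (Finset.Subset.refl _) (Finset.sup_mono hsub1)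
    have hcov2 : lam ≤ 2 * (Q ∩ 𝓒.sup id).card :=
      le_trans hcov (Nat.mul_le_mul_left 2 (Finset.card_le_card hmono))
    have hcle : c1 ≤ (Q ∩ 𝓒.sup id).card := by omega
    obtain ⟨S, hSsub, hScard⟩ := Finset.exists_subset_card_eq hcle
    have hSQ : S ⊆ Q := hSsub.trans (Finset.inter_subset_left)
    have hc1lam : c1 ≤ lam := by omega
    refine ⟨⟨𝓒, S, Q \ S⟩, ?_, ?_⟩
    · simp only [hT, Finset.mem_coe, Finset.mem_sigma, Finset.mem_powersetCard,
        Finset.mem_product]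
      refine ⟨⟨hsub2, h𝓒card⟩, ⟨hSsub.trans Finset.inter_subset_right, hScard⟩,
        Finset.subset_univ _, ?_⟩
      rw [Finset.card_sdiff_of_subset hSQ, hScard, hQcard]
      omega
    · simp only
      exact Finset.union_sdiff_of_subset hSQ
  have h1 := Finset.card_le_card_of_surjOn _ hsurj
  rw [Finset.card_powersetCard, Finset.card_univ, Fintype.card_fin] at h1
  refine h1.trans ?_
  rw [hT, Finset.card_sigma]
  calc ∑ 𝓒 ∈ 𝓑.powersetCard t,
        (((𝓒.sup id).powersetCard c1) ×ˢ ((Finset.univ : Finset (Fin n)).powersetCard c2)).card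
      ≤ ∑ _𝓒 ∈ 𝓑.powersetCard t, (t * B).choose c1 * n.choose c2 := by
        refine Finset.sum_le_sum fun 𝓒 h𝓒 => ?_
        simp only [Finset.mem_powersetCard] at h𝓒
        rw [Finset.card_product, Finset.card_powersetCard, Finset.card_powersetCard,
          Finset.card_univ, Fintype.card_fin]
        have hsup : (𝓒.sup id).card ≤ t * B := by
          calc (𝓒.sup id).card = (𝓒.biUnion id).card := by rw [Finset.sup_eq_biUnion]
            _ ≤ ∑ b ∈ 𝓒, (id b).card := Finset.card_biUnion_le
            _ ≤ ∑ _b ∈ 𝓒, B := Finset.sum_le_sum fun b hb => hblocks b (h𝓒.1 hb)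
            _ = t * B := by rw [Finset.sum_const, h𝓒.2, smul_eq_mul]
        exact Nat.mul_le_mul_right _ (Nat.choose_le_choose _ hsup)
    _ = s.choose t * ((t * B).choose c1 * n.choose c2) := by
        rw [Finset.sum_const, Finset.card_powersetCard, hcard, smul_eq_mul]
    _ = s.choose t * (t * B).choose c1 * n.choose c2 := by ring
end

section
/- Let n, λ, B, s, t be positive integers with λ even, λ ≤ n, and t ≤ s. Let 𝓑 be a family of exactly s subsets of {1,…,n}, each of cardinality at most B. Suppose that for every Q ⊆ {1,…,n} with |Q| = λ there exists a subfamily 𝓒 ⊆ 𝓑 with |𝓒| ≤ t such that 2·|Q ∩ ⋃𝓒| ≥ λ. Then, as real numbers, s^(2t/λ) ≥ n/(4·e²·t·B), where e = exp(1). -/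
open Nat Finset

lemma fact_eq_prod_rev (k : ℕ) : (∏ i ∈ range k, (k - i)) = k ! := by
  rw [← Finset.prod_range_reflect]
  rw [← Finset.prod_range_add_one_eq_factorial]
  apply Finset.prod_congr rfl
  intro i hi
  simp only [Finset.mem_range] at hi
  omega

lemma pow_mul_fact_le (a k : ℕ) (hka : k ≤ a) :
    a ^ k * k ! ≤ k ^ k * a.descFactorial k := by
  rw [Nat.descFactorial_eq_prod_range, ← fact_eq_prod_rev]
  calc a ^ k * ∏ i ∈ Finset.range k, (k - i)
      = ∏ i ∈ Finset.range k, a * (k - i) := by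
        rw [Finset.prod_mul_distrib, Finset.prod_const, Finset.card_range]
    _ ≤ ∏ i ∈ Finset.range k, k * (a - i) := ?_
    _ = k ^ k * ∏ i ∈ Finset.range k, (a - i) := by
        rw [Finset.prod_mul_distrib, Finset.prod_const, Finset.card_range]
  apply Finset.prod_le_prod'
  intro i hi
  simp only [Finset.mem_range] at hi
  have h1 : a * (k - i) + a * i = a * k := by rw [← Nat.mul_add]; congr 1; omega
  have h2 : k * (a - i) + k * i = k * a := by rw [← Nat.mul_add]; congr 1; omega
  have h3 : k * i ≤ a * i := Nat.mul_le_mul_right _ hka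
  have h4 : a * k = k * a := Nat.mul_comm a k
  omega

lemma div_pow_le_choose (a k : ℕ) (hk : 0 < k) (hka : k ≤ a) :
    ((a : ℝ) / k) ^ k ≤ (a.choose k : ℝ) := by
  have h := pow_mul_fact_le a k hka
  rw [Nat.descFactorial_eq_factorial_mul_choose] at h
  have h' : a ^ k * k ! ≤ (k ^ k * a.choose k) * k ! := by
    calc a ^ k * k ! ≤ k ^ k * (k ! * a.choose k) := h
    _ = (k ^ k * a.choose k) * k ! := by ring
  have h2 : a ^ k ≤ k ^ k * a.choose k := Nat.le_of_mul_le_mul_right h' k.factorial_pos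
  have h2' : (a : ℝ) ^ k ≤ (k : ℝ) ^ k * a.choose k := by exact_mod_cast h2
  rw [div_pow, div_le_iff₀ (by positivity)]
  linarith [h2']

lemma choose_sq_identity (n m : ℕ) (h : 2 * m ≤ n) :
    n.choose m * (n - m).choose m = n.choose (2 * m) * (2 * m).choose m := by
  have e1 := Nat.choose_mul_factorial_mul_factorial (show m ≤ n by omega)
  have e2 := Nat.choose_mul_factorial_mul_factorial (show m ≤ n - m by omega)
  have e3 := Nat.choose_mul_factorial_mul_factorial (show 2 * m ≤ n from h)
  have e4 := Nat.choose_mul_factorial_mul_factorial (show m ≤ 2 * m by omega)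
  rw [show n - m - m = n - 2 * m by omega] at e2
  rw [show 2 * m - m = m by omega] at e4
  have hpos : 0 < m ! * (m ! * (n - 2 * m)!) := by positivity
  apply Nat.eq_of_mul_eq_mul_right hpos
  calc n.choose m * (n - m).choose m * (m ! * (m ! * (n - 2 * m)!))
      = (n.choose m * m !) * ((n - m).choose m * m ! * (n - 2 * m)!) := by ring
    _ = (n.choose m * m !) * (n - m)! := by rw [e2]
    _ = n ! := by rw [← e1]
    _ = n.choose (2 * m) * (2 * m)! * (n - 2 * m)! := e3.symm
    _ = n.choose (2 * m) * ((2 * m).choose m * m ! * m !) * (n - 2 * m)! := by rw [e4]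
    _ = n.choose (2 * m) * (2 * m).choose m * (m ! * (m ! * (n - 2 * m)!)) := by ring

/-- space–I/O tradeoff for the relaxed λ-set workload. -/
theorem relaxed_set_workload_tradeoff
    (n lam B s t : ℕ) (hn : 0 < n) (hlam : 0 < lam) (heven : Even lam)
    (hB : 0 < B) (hs : 0 < s) (ht : 0 < t) (hln : lam ≤ n) (hts : t ≤ s)
    (𝓑 : Finset (Finset (Fin n))) (hcard : 𝓑.card = s)
    (hblocks : ∀ b ∈ 𝓑, b.card ≤ B)
    (hwork : ∀ Q : Finset (Fin n), Q.card = lam →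
      ∃ 𝓒 ⊆ 𝓑, 𝓒.card ≤ t ∧ lam ≤ 2 * (Q ∩ 𝓒.sup id).card) :
    (s : ℝ) ^ ((2 * (t : ℝ)) / (lam : ℝ)) ≥
      (n : ℝ) / (4 * Real.exp 1 ^ 2 * (t : ℝ) * (B : ℝ)) := by
  classical
  obtain ⟨m, hm2⟩ := heven
  have hlam2 : lam = 2 * m := by omega
  have hm : 0 < m := by omega
  have h2mn : 2 * m ≤ n := by omega
  set T : Finset (Finset (Fin n)) :=
    (Finset.univ.powersetCard m).filter
      (fun S => ∃ 𝓒 ∈ 𝓑.powersetCard t, S ⊆ 𝓒.sup id) with hT_def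
  -- every 2m-set contains a member of T
  have stepA : ∀ Q ∈ (Finset.univ.powersetCard (2 * m) : Finset (Finset (Fin n))),
      ∃ S ∈ T, S ⊆ Q := by
    intro Q hQ
    rw [Finset.mem_powersetCard] at hQ
    obtain ⟨𝓒, h𝓒B, h𝓒t, hcov⟩ := hwork Q (by omega)
    have hm' : m ≤ (Q ∩ 𝓒.sup id).card := by omega
    obtain ⟨S, hSsub, hScard⟩ := Finset.exists_subset_card_eq hm'
    obtain ⟨𝓒', h1, h2, h3⟩ := Finset.exists_subsuperset_card_eq h𝓒B h𝓒t
      (by rw [hcard]; exact hts)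
    refine ⟨S, ?_, hSsub.trans Finset.inter_subset_left⟩
    rw [hT_def, Finset.mem_filter, Finset.mem_powersetCard]
    refine ⟨⟨Finset.subset_univ S, hScard⟩, 𝓒', ?_, ?_⟩
    · rw [Finset.mem_powersetCard]; exact ⟨h2, h3⟩
    · exact hSsub.trans ((Finset.inter_subset_right).trans (Finset.sup_mono h1))
  -- size of T
  have hTcard : T.card ≤ s.choose t * (t * B).choose m := by
    have hsub : T ⊆ (𝓑.powersetCard t).biUnion (fun 𝓒 => (𝓒.sup id).powersetCard m) := by
      intro S hS
      rw [hT_def, Finset.mem_filter] at hS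
      obtain ⟨hS1, 𝓒, h𝓒, hsub⟩ := hS
      rw [Finset.mem_biUnion]
      exact ⟨𝓒, h𝓒, Finset.mem_powersetCard.2 ⟨hsub, (Finset.mem_powersetCard.1 hS1).2⟩⟩
    calc T.card ≤ ((𝓑.powersetCard t).biUnion
          (fun 𝓒 => (𝓒.sup id).powersetCard m)).card := Finset.card_le_card hsub
      _ ≤ ∑ 𝓒 ∈ 𝓑.powersetCard t, ((𝓒.sup id).powersetCard m).card :=
          Finset.card_biUnion_le
      _ ≤ ∑ 𝓒 ∈ 𝓑.powersetCard t, (t * B).choose m := by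
          apply Finset.sum_le_sum
          intro 𝓒 h𝓒
          rw [Finset.card_powersetCard]
          apply Nat.choose_le_choose
          rw [Finset.mem_powersetCard] at h𝓒
          calc (𝓒.sup id).card ≤ ∑ b ∈ 𝓒, (id b).card := by
                rw [Finset.sup_eq_biUnion]; exact Finset.card_biUnion_le
            _ ≤ ∑ _b ∈ 𝓒, B := Finset.sum_le_sum (fun b hb => hblocks b (h𝓒.1 hb))
            _ = t * B := by rw [Finset.sum_const, h𝓒.2, smul_eq_mul]
      _ = s.choose t * (t * B).choose m := by
          rw [Finset.sum_const, Finset.card_powersetCard, hcard, smul_eq_mul]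
  -- double counting
  have stepC : n.choose (2 * m) ≤ T.card * n.choose m := by
    have hinj : (Finset.univ.powersetCard (2 * m) : Finset (Finset (Fin n))).card
        ≤ (T ×ˢ (Finset.univ.powersetCard m : Finset (Finset (Fin n)))).card := by
      apply Finset.card_le_card_of_injOn
        (fun Q => if h : ∃ S ∈ T, S ⊆ Q then (h.choose, Q \ h.choose) else (∅, ∅))
      · intro Q hQ
        have h : ∃ S ∈ T, S ⊆ Q := stepA Q hQ
        simp only [dif_pos h]
        obtain ⟨hT', hsub⟩ := h.choose_spec
        rw [Finset.mem_coe, Finset.mem_product]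
        refine ⟨hT', ?_⟩
        rw [Finset.mem_powersetCard]
        refine ⟨Finset.subset_univ _, ?_⟩
        rw [Finset.card_sdiff_of_subset hsub]
        have hc : h.choose.card = m := (Finset.mem_powersetCard.1 (Finset.mem_filter.1 hT').1).2
        have hQc : Q.card = 2 * m := (Finset.mem_powersetCard.1 hQ).2
        omega
      · intro Q1 h1 Q2 h2 heq
        have e1 : ∃ S ∈ T, S ⊆ Q1 := stepA Q1 h1
        have e2 : ∃ S ∈ T, S ⊆ Q2 := stepA Q2 h2
        simp only [dif_pos e1, dif_pos e2, Prod.mk.injEq] at heq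
        obtain ⟨hS, hD⟩ := heq
        have hs1 := e1.choose_spec.2
        have hs2 := e2.choose_spec.2
        have hQ1 : Q1 = e2.choose ∪ (Q2 \ e2.choose) := by
          rw [← hD, ← hS]
          exact (Finset.union_sdiff_of_subset hs1).symm
        rw [hQ1]
        exact Finset.union_sdiff_of_subset hs2
    rwa [Finset.card_powersetCard, Finset.card_product, Finset.card_powersetCard,
      Finset.card_univ, Fintype.card_fin] at hinj
  -- cancel C(n,m)
  have stepD : (n - m).choose m ≤ s ^ t * ((t * B).choose m) * (4 ^ m) := by
    have hid := choose_sq_identity n m h2mn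
    have h1 : n.choose m * ((n - m).choose m) ≤ n.choose m * (T.card * (2 * m).choose m) := by
      calc n.choose m * ((n - m).choose m) = n.choose (2 * m) * (2 * m).choose m := hid
        _ ≤ (T.card * n.choose m) * (2 * m).choose m := Nat.mul_le_mul_right _ stepC
        _ = n.choose m * (T.card * (2 * m).choose m) := by ring
    have h2 := Nat.le_of_mul_le_mul_left h1 (Nat.choose_pos (show m ≤ n by omega))
    have h4 : (2 * m).choose m ≤ 4 ^ m :=
      le_trans (Nat.choose_le_choose m (by omega)) (Nat.choose_middle_le_pow m)
    have hst : s.choose t ≤ s ^ t := Nat.choose_le_pow s t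
    calc (n - m).choose m ≤ T.card * (2 * m).choose m := h2
      _ ≤ (s.choose t * (t * B).choose m) * 4 ^ m := Nat.mul_le_mul hTcard h4
      _ ≤ (s ^ t * (t * B).choose m) * 4 ^ m := by
          exact Nat.mul_le_mul_right _ (Nat.mul_le_mul_right _ hst)
  -- move to the reals
  set E : ℝ := Real.exp 1 with hE_def
  have hE : (0:ℝ) < E := Real.exp_pos 1
  have hm' : (0:ℝ) < m := by exact_mod_cast hm
  have ht' : (0:ℝ) < t := by exact_mod_cast ht
  have hB' : (0:ℝ) < B := by exact_mod_cast hB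
  have hn' : (0:ℝ) < n := by exact_mod_cast hn
  have hs' : (0:ℝ) < s := by exact_mod_cast hs
  have h2mn' : 2 * (m:ℝ) ≤ n := by exact_mod_cast h2mn
  have key1 : ((n:ℝ) / (2 * m)) ^ m ≤ ((n - m).choose m : ℝ) := by
    refine le_trans (pow_le_pow_left₀ (by positivity) ?_ m) (div_pow_le_choose (n - m) m hm (by omega))
    rw [Nat.cast_sub (by omega : m ≤ n)]
    rw [div_le_div_iff₀ (by positivity) hm']
    nlinarith [hm', h2mn']
  have hc2 : (((t * B).choose m : ℕ) : ℝ) ≤ (E * t * B / m) ^ m := by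
    have hfact : (m:ℝ) ^ m / m ! ≤ E ^ m := by
      rw [hE_def, Real.exp_one_pow]
      exact Real.pow_div_factorial_le_exp (m:ℝ) (Nat.cast_nonneg m) m
    calc (((t * B).choose m : ℕ) : ℝ) ≤ ((t * B : ℕ) : ℝ) ^ m / m ! :=
          Nat.choose_le_pow_div m (t * B)
      _ = ((t:ℝ) * B / m) ^ m * ((m:ℝ) ^ m / m !) := by
          have hmne : (m:ℝ) ≠ 0 := ne_of_gt hm'
          have hfne : ((m ! : ℕ):ℝ) ≠ 0 := by positivity
          push_cast
          field_simp
          rw [div_pow, div_mul_cancel₀ _ (pow_ne_zero _ hmne)]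
      _ ≤ ((t:ℝ) * B / m) ^ m * E ^ m := by
          exact mul_le_mul_of_nonneg_left hfact (by positivity)
      _ = (E * t * B / m) ^ m := by
          rw [← mul_pow]; congr 1; field_simp
  have main : ((n:ℝ) / (2 * m)) ^ m ≤ (s:ℝ) ^ t * (4 * E * t * B / m) ^ m := by
    have c1 : ((n:ℝ) / (2 * m)) ^ m ≤ ((s:ℝ) ^ t * (((t * B).choose m : ℕ) : ℝ)) * 4 ^ m := by
      refine le_trans key1 ?_
      have := stepD
      calc ((n - m).choose m : ℝ) ≤ ((s ^ t * ((t * B).choose m) * 4 ^ m : ℕ) : ℝ) := by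
            exact_mod_cast stepD
        _ = ((s:ℝ) ^ t * (((t * B).choose m : ℕ) : ℝ)) * 4 ^ m := by push_cast; ring
    refine le_trans c1 ?_
    calc ((s:ℝ) ^ t * (((t * B).choose m : ℕ) : ℝ)) * 4 ^ m
        ≤ ((s:ℝ) ^ t * (E * t * B / m) ^ m) * 4 ^ m := by
          apply mul_le_mul_of_nonneg_right _ (by positivity)
          exact mul_le_mul_of_nonneg_left hc2 (by positivity)
      _ = (s:ℝ) ^ t * (4 * E * t * B / m) ^ m := by
          rw [mul_assoc, ← mul_pow]
          congr 2
          field_simp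
  have hY : (0:ℝ) < 4 * E * t * B / m := by positivity
  have hz : ((n:ℝ) / (8 * E * t * B)) ^ m ≤ (s:ℝ) ^ t := by
    have heq : (n:ℝ) / (8 * E * t * B) = ((n:ℝ) / (2 * m)) / (4 * E * t * B / m) := by
      field_simp
      ring
    rw [heq, div_pow, div_le_iff₀ (by positivity)]
    exact main
  -- rpow manipulations
  have hz0 : (0:ℝ) < (n:ℝ) / (8 * E * t * B) := by positivity
  have hrpow : (n:ℝ) / (8 * E * t * B) ≤ (s:ℝ) ^ ((t:ℝ) / m) := by
    have h1 : (((n:ℝ) / (8 * E * t * B)) ^ (m:ℕ)) ^ ((1:ℝ)/m)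
        ≤ ((s:ℝ) ^ (t:ℕ)) ^ ((1:ℝ)/m) :=
      Real.rpow_le_rpow (by positivity) hz (by positivity)
    rw [← Real.rpow_natCast ((n:ℝ) / (8 * E * t * B)) m, ← Real.rpow_natCast (s:ℝ) t,
      ← Real.rpow_mul (le_of_lt hz0), ← Real.rpow_mul (le_of_lt hs')] at h1
    rw [show (m:ℝ) * ((1:ℝ)/m) = 1 by field_simp] at h1
    rw [show (t:ℝ) * ((1:ℝ)/m) = (t:ℝ)/m by ring] at h1
    simpa using h1
  have hexp : (2 * (t:ℝ)) / (lam:ℝ) = (t:ℝ) / m := by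
    have : (lam:ℝ) = 2 * m := by exact_mod_cast hlam2
    rw [this]
    field_simp
  rw [ge_iff_le, hexp]
  refine le_trans ?_ hrpow
  have h2E : (2:ℝ) ≤ E := by
    have := Real.add_one_le_exp (1:ℝ)
    rw [hE_def]; linarith
  apply div_le_div_of_nonneg_left (le_of_lt hn') (by positivity)
  nlinarith [mul_le_mul_of_nonneg_left h2E (show (0:ℝ) ≤ 4 * E * t * B by positivity)]
end

section
/- Let n, λ, B, s, t be positive integers with λ even, λ ≤ n, and t ≤ s, and let α be a real number with 1 ≤ α ≤ B and t ≤ λ/α. Let 𝓑 be a family of exactly s subsets of {1,…,n}, each of cardinality at most B. Suppose that for every Q ⊆ {1,…,n} with |Q| = λ there exists a subfamily 𝓒 ⊆ 𝓑 with |𝓒| ≤ t such that 2·|Q ∩ ⋃𝓒| ≥ λ. Then, as real numbers, s ≥ ((1/(2e))·√(n·α/(λ·B)))^α, where e = exp(1). -/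
open Finset Nat in
lemma aux_pow_le_choose {N m : ℕ} (h : m ≤ N) : N ^ m ≤ m ^ m * N.choose m := by
  have hf2 : ∀ k : ℕ, ∏ i ∈ range k, (i + 1) = k ! := by
    intro k
    induction k with
    | zero => simp
    | succ k ih => rw [prod_range_succ, ih, Nat.factorial_succ]; ring
  have hfac : ∏ i ∈ range m, (m - i) = m ! := by
    rw [← hf2 m, ← Finset.prod_range_reflect (fun j => j + 1) m]
    apply Finset.prod_congr rfl
    intro i hi
    have : i < m := Finset.mem_range.mp hi
    omega
  have h1 : N ^ m * m ! ≤ N.descFactorial m * m ^ m := by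
    have key : (∏ i ∈ range m, (N * (m - i))) ≤ ∏ i ∈ range m, ((N - i) * m) := by
      apply Finset.prod_le_prod'
      intro i hi
      have hi' : i < m := Finset.mem_range.mp hi
      have e1 : N * (m - i) = N * m - N * i := Nat.mul_sub N m i
      have e2 : (N - i) * m = N * m - i * m := Nat.sub_mul N i m
      have h3 : i * m ≤ i * N := Nat.mul_le_mul_left i h
      have h4 : i * N = N * i := Nat.mul_comm i N
      omega
    rw [Finset.prod_mul_distrib, Finset.prod_mul_distrib, Finset.prod_const, Finset.prod_const,
      Finset.card_range, hfac] at key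
    rwa [Nat.descFactorial_eq_prod_range]
  rw [Nat.descFactorial_eq_factorial_mul_choose] at h1
  have h2 : N ^ m * m ! ≤ (m ^ m * N.choose m) * m ! := by
    calc N ^ m * m ! ≤ m ! * N.choose m * m ^ m := h1
    _ = (m ^ m * N.choose m) * m ! := by ring
  exact Nat.le_of_mul_le_mul_right h2 (Nat.factorial_pos m)

open Finset in
lemma aux_count (n lam B s t m : ℕ) (hm : lam = m + m) (hts : t ≤ s)
    (𝓑 : Finset (Finset (Fin n))) (hcard : 𝓑.card = s)
    (hblocks : ∀ b ∈ 𝓑, b.card ≤ B)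
    (hwork : ∀ Q : Finset (Fin n), Q.card = lam →
      ∃ 𝓒 ⊆ 𝓑, 𝓒.card ≤ t ∧ lam ≤ 2 * (Q ∩ 𝓒.sup id).card) :
    n.choose lam ≤ s.choose t * ((t * B).choose m * n.choose m) := by
  classical
  set P := (univ : Finset (Fin n)).powersetCard lam with hP
  set T := (𝓑.powersetCard t).sigma
      (fun C => ((C.sup id).powersetCard m) ×ˢ ((univ : Finset (Fin n)).powersetCard m)) with hT
  have hsurj : Set.SurjOn
      (fun p : (Σ _ : Finset (Finset (Fin n)), Finset (Fin n) × Finset (Fin n)) =>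
        p.2.1 ∪ p.2.2) ↑T ↑P := by
    intro Q hQ
    rw [Finset.mem_coe, hP, Finset.mem_powersetCard] at hQ
    obtain ⟨-, hQcard⟩ := hQ
    obtain ⟨C0, hC0B, hC0card, hC0cov⟩ := hwork Q hQcard
    obtain ⟨C, hC0C, hCB, hCcard⟩ :=
      Finset.exists_subsuperset_card_eq hC0B hC0card (hcard ▸ hts)
    have hUsub : Q ∩ C0.sup id ⊆ Q ∩ C.sup id :=
      Finset.inter_subset_inter (Finset.Subset.refl Q) (Finset.sup_mono hC0C)
    have hm' : m ≤ (Q ∩ C.sup id).card := by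
      have := Finset.card_le_card hUsub; omega
    obtain ⟨S, hSsub, hScard⟩ := Finset.exists_subset_card_eq hm'
    have hSQ : S ⊆ Q := hSsub.trans Finset.inter_subset_left
    refine ⟨⟨C, (S, Q \ S)⟩, ?_, ?_⟩
    · rw [Finset.mem_coe, hT, Finset.mem_sigma]
      refine ⟨Finset.mem_powersetCard.mpr ⟨hCB, hCcard⟩, ?_⟩
      rw [Finset.mem_product]
      refine ⟨Finset.mem_powersetCard.mpr ⟨hSsub.trans Finset.inter_subset_right, hScard⟩,
        Finset.mem_powersetCard.mpr ⟨Finset.subset_univ _, ?_⟩⟩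
      rw [Finset.card_sdiff_of_subset hSQ]; omega
    · exact Finset.union_sdiff_of_subset hSQ
  have h1 : P.card ≤ T.card := Finset.card_le_card_of_surjOn _ hsurj
  have hPcard : P.card = n.choose lam := by
    rw [hP, Finset.card_powersetCard, Finset.card_univ, Fintype.card_fin]
  have hTcard : T.card ≤ s.choose t * ((t * B).choose m * n.choose m) := by
    rw [hT, Finset.card_sigma]
    have hbound : ∀ C ∈ 𝓑.powersetCard t,
        (((C.sup id).powersetCard m) ×ˢ ((univ : Finset (Fin n)).powersetCard m)).card
          ≤ (t * B).choose m * n.choose m := by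
      intro C hC
      rw [Finset.mem_powersetCard] at hC
      obtain ⟨hCB, hCcard⟩ := hC
      have hU : (C.sup id).card ≤ t * B := by
        rw [Finset.sup_eq_biUnion]
        calc (C.biUnion id).card ≤ ∑ b ∈ C, (id b).card := Finset.card_biUnion_le
        _ ≤ C.card • B := Finset.sum_le_card_nsmul C _ B (fun b hb => hblocks b (hCB hb))
        _ = t * B := by rw [hCcard, smul_eq_mul]
      rw [Finset.card_product, Finset.card_powersetCard, Finset.card_powersetCard,
        Finset.card_univ, Fintype.card_fin]
      exact Nat.mul_le_mul_right _ (Nat.choose_le_choose m hU)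
    calc ∑ C ∈ 𝓑.powersetCard t,
          (((C.sup id).powersetCard m) ×ˢ ((univ : Finset (Fin n)).powersetCard m)).card
        ≤ (𝓑.powersetCard t).card • ((t * B).choose m * n.choose m) :=
          Finset.sum_le_card_nsmul _ _ _ hbound
      _ = s.choose t * ((t * B).choose m * n.choose m) := by
          rw [Finset.card_powersetCard, hcard, smul_eq_mul]
  omega

open Finset Nat in
lemma aux_m_pow_le (m : ℕ) : (m : ℝ) ^ m ≤ Real.exp 1 ^ m * m ! := by
  have h := Real.sum_le_exp_of_nonneg (show (0:ℝ) ≤ (m:ℝ) by positivity) (m + 1)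
  have hterm : (m:ℝ) ^ m / m ! ≤ ∑ i ∈ range (m + 1), (m:ℝ) ^ i / i ! :=
    Finset.single_le_sum (f := fun i => (m:ℝ) ^ i / i !)
      (fun i _ => by positivity) (Finset.self_mem_range_succ m)
  have hle : (m:ℝ) ^ m / m ! ≤ Real.exp 1 ^ m := by
    have he : Real.exp ((m : ℕ) * (1:ℝ)) = Real.exp 1 ^ m := Real.exp_nat_mul 1 m
    simp only [mul_one] at he
    exact (hterm.trans h).trans_eq he
  have hfpos : (0:ℝ) < m ! := by exact_mod_cast Nat.factorial_pos m
  calc (m:ℝ) ^ m = ((m:ℝ) ^ m / m !) * m ! := by field_simp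
  _ ≤ Real.exp 1 ^ m * m ! := by
      exact mul_le_mul_of_nonneg_right hle hfpos.le

lemma aux_8e : 8 * Real.exp 1 ≤ 4 * Real.exp 1 ^ 2 := by
  have he2 : (2:ℝ) ≤ Real.exp 1 := by
    have := Real.exp_one_gt_d9; linarith
  nlinarith [he2]

set_option maxHeartbeats 1000000 in
/-- space lower bound for the relaxed λ-set workload with
query time `t ≤ λ/α`. -/
theorem relaxed_set_workload_space_lower_bound
    (n lam B s t : ℕ) (α : ℝ) (hn : 0 < n) (hlam : 0 < lam) (heven : Even lam)
    (hB : 0 < B) (hs : 0 < s) (ht : 0 < t) (hln : lam ≤ n) (hts : t ≤ s)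
    (hα1 : 1 ≤ α) (hαB : α ≤ (B : ℝ)) (htα : (t : ℝ) ≤ (lam : ℝ) / α)
    (𝓑 : Finset (Finset (Fin n))) (hcard : 𝓑.card = s)
    (hblocks : ∀ b ∈ 𝓑, b.card ≤ B)
    (hwork : ∀ Q : Finset (Fin n), Q.card = lam →
      ∃ 𝓒 ⊆ 𝓑, 𝓒.card ≤ t ∧ lam ≤ 2 * (Q ∩ 𝓒.sup id).card) :
    (s : ℝ) ≥
      ((1 / (2 * Real.exp 1)) *
        Real.sqrt ((n : ℝ) * α / ((lam : ℝ) * (B : ℝ)))) ^ α := by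
  classical
  obtain ⟨m, hm⟩ := heven
  have hmpos : 0 < m := by omega
  have hepos : (0:ℝ) < Real.exp 1 := Real.exp_pos 1
  have he2 : (2:ℝ) ≤ Real.exp 1 := by
    have := Real.exp_one_gt_d9; linarith
  have hα0 : (0:ℝ) < α := by linarith
  -- basic nat counting
  have h_count : n.choose lam ≤ s.choose t * ((t * B).choose m * n.choose m) :=
    aux_count n lam B s t m hm hts 𝓑 hcard hblocks hwork
  have hid := Nat.choose_mul (n := n) (show m ≤ lam by omega)
  rw [show lam - m = m by omega] at hid
  have hposnm : 0 < n.choose m := Nat.choose_pos (by omega)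
  have key : (n - m).choose m ≤ s.choose t * ((t * B).choose m * lam.choose m) := by
    have hmul : n.choose m * ((n - m).choose m)
        ≤ n.choose m * (s.choose t * ((t * B).choose m * lam.choose m)) := by
      calc n.choose m * (n - m).choose m = n.choose lam * lam.choose m := hid.symm
        _ ≤ (s.choose t * ((t * B).choose m * n.choose m)) * lam.choose m :=
            Nat.mul_le_mul_right _ h_count
        _ = n.choose m * (s.choose t * ((t * B).choose m * lam.choose m)) := by ring
    exact Nat.le_of_mul_le_mul_left hmul hposnm
  have h4 : lam.choose m ≤ 4 ^ m := by
    calc lam.choose m ≤ (2 * m + 1).choose m := Nat.choose_le_choose m (by omega)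
      _ ≤ 4 ^ m := Nat.choose_middle_le_pow m
  -- real chain
  set N := n - m with hN
  have hNm : m ≤ N := by omega
  have hNchoose : ((N:ℝ)) ^ m ≤ (m:ℝ) ^ m * (N.choose m) := by
    exact_mod_cast aux_pow_le_choose hNm
  have hcb : ((t * B).choose m : ℝ) ≤ ((t:ℝ) * B) ^ m / ((Nat.factorial m : ℕ) : ℝ) := by
    have := Nat.choose_le_pow_div (α := ℝ) m (t * B)
    push_cast at this ⊢
    exact this
  have hst' : ((s.choose t : ℕ) : ℝ) ≤ (s:ℝ) ^ t := by
    exact_mod_cast Nat.choose_le_pow s t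
  have hkeyR : ((N.choose m : ℕ) : ℝ)
      ≤ (s:ℝ) ^ t * (((t:ℝ) * B) ^ m / ((Nat.factorial m : ℕ) : ℝ)) * (4:ℝ) ^ m := by
    have h1 : ((N.choose m : ℕ) : ℝ)
        ≤ (s.choose t : ℝ) * ((t * B).choose m : ℝ) * (lam.choose m : ℝ) := by
      exact_mod_cast Nat.le_of_eq rfl |>.trans (by exact_mod_cast key) |>.trans_eq (by push_cast; ring)
    calc ((N.choose m : ℕ) : ℝ)
        ≤ (s.choose t : ℝ) * ((t * B).choose m : ℝ) * (lam.choose m : ℝ) := h1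
      _ ≤ (s:ℝ) ^ t * (((t:ℝ) * B) ^ m / ((Nat.factorial m : ℕ) : ℝ)) * (4:ℝ) ^ m := by
          apply mul_le_mul
          · exact mul_le_mul hst' hcb (by positivity) (by positivity)
          · exact_mod_cast h4
          · positivity
          · positivity
  set D : ℝ := 4 * Real.exp 1 * (t * B) with hD
  have hDpos : 0 < D := by positivity
  have hmain : ((N:ℝ)) ^ m ≤ (s:ℝ) ^ t * D ^ m := by
    have hfpos : (0:ℝ) < ((Nat.factorial m : ℕ) : ℝ) := by exact_mod_cast Nat.factorial_pos m
    calc ((N:ℝ)) ^ m ≤ (m:ℝ) ^ m * (N.choose m) := hNchoose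
      _ ≤ (m:ℝ) ^ m * ((s:ℝ) ^ t * (((t:ℝ) * B) ^ m / ((Nat.factorial m : ℕ) : ℝ)) * (4:ℝ) ^ m) :=
          mul_le_mul_of_nonneg_left hkeyR (by positivity)
      _ ≤ (Real.exp 1 ^ m * ((Nat.factorial m : ℕ) : ℝ)) * ((s:ℝ) ^ t * (((t:ℝ) * B) ^ m / ((Nat.factorial m : ℕ) : ℝ)) * (4:ℝ) ^ m) :=
          mul_le_mul_of_nonneg_right (aux_m_pow_le m) (by positivity)
      _ = (s:ℝ) ^ t * (4 * Real.exp 1 * ((t:ℝ) * B)) ^ m := by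
          rw [mul_pow, mul_pow]; field_simp; ring
      _ = (s:ℝ) ^ t * D ^ m := by rw [hD]
  -- w ≤ N / D
  set w : ℝ := (n:ℝ) * α / (8 * Real.exp 1 * lam * B) with hw
  have hwpos : 0 < w := by positivity
  have htα' : (t:ℝ) * α ≤ (lam:ℝ) := by
    rw [le_div_iff₀ hα0] at htα; exact htα
  have hwND : w ≤ (N:ℝ) / D := by
    have htpos : (0:ℝ) < (t:ℝ) := by exact_mod_cast ht
    have h1 : w ≤ (n:ℝ) / (8 * Real.exp 1 * t * B) := by
      have h2 : (n:ℝ) * α / (8 * Real.exp 1 * lam * B)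
          ≤ (n:ℝ) * α / (8 * Real.exp 1 * ((t:ℝ) * α) * B) := by
        apply div_le_div_of_nonneg_left (by positivity) (by positivity)
        have hh := mul_le_mul_of_nonneg_left htα'
          (by positivity : (0:ℝ) ≤ 8 * Real.exp 1)
        have hBpos : (0:ℝ) < B := by exact_mod_cast hB
        nlinarith [mul_le_mul_of_nonneg_right hh hBpos.le]
      have h3 : (n:ℝ) * α / (8 * Real.exp 1 * ((t:ℝ) * α) * B)
          = (n:ℝ) / (8 * Real.exp 1 * t * B) := by
        field_simp
      rw [hw]
      exact h2.trans_eq h3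
    have hNcast : (N:ℝ) = (n:ℝ) - m := by
      rw [hN]; exact_mod_cast Nat.cast_sub (show m ≤ n by omega)
    have hNhalf : (n:ℝ) / 2 ≤ (N:ℝ) := by
      rw [hNcast]
      have hm2 : m + m ≤ n := by omega
      have : (m:ℝ) + m ≤ n := by exact_mod_cast hm2
      linarith
    calc w ≤ (n:ℝ) / (8 * Real.exp 1 * t * B) := h1
      _ = ((n:ℝ) / 2) / D := by rw [hD, div_div]; congr 1; ring
      _ ≤ (N:ℝ) / D := by gcongr
  have hstw : w ^ m ≤ (s:ℝ) ^ t := by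
    calc w ^ m ≤ ((N:ℝ) / D) ^ m := pow_le_pow_left₀ hwpos.le hwND m
      _ = ((N:ℝ)) ^ m / D ^ m := div_pow _ _ m
      _ ≤ (s:ℝ) ^ t := by
          rw [div_le_iff₀ (by positivity)]; exact hmain
  -- now the rpow part
  set y : ℝ := (n:ℝ) * α / ((lam:ℝ) * B) with hy
  have hy0 : 0 ≤ y := by positivity
  set x : ℝ := (1 / (2 * Real.exp 1)) * Real.sqrt y with hx
  have hx0 : 0 ≤ x := by positivity
  rw [ge_iff_le]
  by_cases hx1 : x ≤ 1
  · calc x ^ α ≤ 1 := Real.rpow_le_one hx0 hx1 hα0.le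
      _ ≤ (s:ℝ) := by exact_mod_cast hs
  · push_neg at hx1
    set z : ℝ := y / (4 * Real.exp 1 ^ 2) with hz
    have hz0 : 0 ≤ z := by positivity
    have hxz : x = Real.sqrt z := by
      have : z = y * (1 / (2 * Real.exp 1)) ^ 2 := by
        rw [hz, div_pow, one_pow, mul_one_div, mul_pow]; norm_num
      rw [this, Real.sqrt_mul hy0, Real.sqrt_sq (by positivity), hx, mul_comm]
    rw [hxz] at hx1
    have hz1 : 1 < z := by
      by_contra hcon
      push_neg at hcon
      have := Real.sqrt_le_one.2 hcon
      linarith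
    have hzw : z ≤ w := by
      have hlb : (0:ℝ) ≤ (lam:ℝ) * B := by positivity
      have hd : 8 * Real.exp 1 * (lam * B) ≤ (lam:ℝ) * B * (4 * Real.exp 1 ^ 2) := by
        have h9 := mul_le_mul_of_nonneg_left aux_8e hlb
        nlinarith [h9]
      calc z = (n:ℝ) * α / ((lam:ℝ) * B * (4 * Real.exp 1 ^ 2)) := by
            rw [hz, hy, div_div]
        _ ≤ (n:ℝ) * α / (8 * Real.exp 1 * ((lam:ℝ) * B)) :=
            div_le_div_of_nonneg_left (by positivity) (by positivity) hd
        _ = w := by rw [hw]; congr 1; ring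
    have hw1 : 1 ≤ w := hz1.le.trans hzw
    have hexp : α / 2 ≤ (m:ℝ) / t := by
      rw [div_le_div_iff₀ (by norm_num) (by exact_mod_cast ht)]
      have hlm : (lam:ℝ) = (m:ℝ) + m := by rw [hm]; push_cast; ring
      nlinarith [htα']
    have htne : (t:ℝ) ≠ 0 := by exact_mod_cast ht.ne'
    rw [hxz]
    calc Real.sqrt z ^ α = z ^ (α / 2) := by
          rw [Real.sqrt_eq_rpow, ← Real.rpow_mul hz0, one_div, inv_mul_eq_div]
      _ ≤ w ^ (α / 2) := Real.rpow_le_rpow hz0 hzw (by positivity)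
      _ ≤ w ^ ((m:ℝ) / t) := Real.rpow_le_rpow_of_exponent_le hw1 hexp
      _ = (w ^ m) ^ ((t:ℝ)⁻¹) := by
          rw [← Real.rpow_natCast w m, ← Real.rpow_mul hwpos.le, div_eq_mul_inv]
      _ ≤ ((s:ℝ) ^ t) ^ ((t:ℝ)⁻¹) := by
          apply Real.rpow_le_rpow (by positivity) hstw (by positivity)
      _ = (s:ℝ) := by
          rw [← Real.rpow_natCast (s:ℝ) t, ← Real.rpow_mul (by positivity),
            mul_inv_cancel₀ htne, Real.rpow_one]
end

section
/- Let n, λ, B, s, t be positive integers with λ ≤ n and t ≤ s. Let 𝓑 be a family of exactly s subsets of {1,…,n}, each of cardinality at most B. Suppose that for every Q ⊆ {1,…,n} with |Q| = λ there exists a subfamily 𝓒 ⊆ 𝓑 with |𝓒| ≤ t such that Q ⊆ ⋃𝓒. Then C(n,λ) ≤ C(s,t) · C(t·B, λ), where C(·,·) denotes the binomial coefficient. -/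
/-- counting inequality for the exact λ-set workload. -/
theorem exact_set_workload_counting
    (n lam B s t : ℕ) (hn : 0 < n) (hlam : 0 < lam) (hB : 0 < B)
    (hs : 0 < s) (ht : 0 < t) (hln : lam ≤ n) (hts : t ≤ s)
    (𝓑 : Finset (Finset (Fin n))) (hcard : 𝓑.card = s)
    (hblocks : ∀ b ∈ 𝓑, b.card ≤ B)
    (hwork : ∀ Q : Finset (Fin n), Q.card = lam →
      ∃ 𝓒 ⊆ 𝓑, 𝓒.card ≤ t ∧ Q ⊆ 𝓒.sup id) :
    Nat.choose n lam ≤ Nat.choose s t * Nat.choose (t * B) lam := by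
  classical
  have hsub : (Finset.univ : Finset (Fin n)).powersetCard lam ⊆
      (𝓑.powersetCard t).biUnion (fun 𝓒 => (𝓒.sup id).powersetCard lam) := by
    intro Q hQ
    rw [Finset.mem_powersetCard] at hQ
    obtain ⟨𝓒, h𝓒, hct, hQs⟩ := hwork Q hQ.2
    obtain ⟨𝓒', h1, h2, h3⟩ := Finset.exists_subsuperset_card_eq h𝓒 hct (hcard ▸ hts)
    refine Finset.mem_biUnion.mpr ⟨𝓒', Finset.mem_powersetCard.mpr ⟨h2, h3⟩, ?_⟩
    exact Finset.mem_powersetCard.mpr ⟨hQs.trans (Finset.sup_mono h1), hQ.2⟩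
  have h1 : Nat.choose n lam =
      ((Finset.univ : Finset (Fin n)).powersetCard lam).card := by
    rw [Finset.card_powersetCard, Finset.card_univ, Fintype.card_fin]
  rw [h1]
  calc ((Finset.univ : Finset (Fin n)).powersetCard lam).card
      ≤ ((𝓑.powersetCard t).biUnion (fun 𝓒 => (𝓒.sup id).powersetCard lam)).card :=
        Finset.card_le_card hsub
    _ ≤ ∑ 𝓒 ∈ 𝓑.powersetCard t, ((𝓒.sup id).powersetCard lam).card :=
        Finset.card_biUnion_le
    _ ≤ (𝓑.powersetCard t).card * Nat.choose (t * B) lam := by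
        rw [← smul_eq_mul]
        apply Finset.sum_le_card_nsmul
        intro 𝓒 h𝓒
        rw [Finset.mem_powersetCard] at h𝓒
        rw [Finset.card_powersetCard]
        apply Nat.choose_le_choose
        calc (𝓒.sup id).card ≤ ∑ b ∈ 𝓒, b.card := by
              rw [Finset.sup_eq_biUnion]
              exact Finset.card_biUnion_le
          _ ≤ 𝓒.card * B := by
              rw [← smul_eq_mul]
              exact Finset.sum_le_card_nsmul _ _ _ fun b hb => hblocks b (h𝓒.1 hb)
          _ = t * B := by rw [h𝓒.2]
    _ = Nat.choose s t * Nat.choose (t * B) lam := by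
        rw [Finset.card_powersetCard, hcard]
end

section
/- Let n, λ, B, s, t be positive integers with λ ≤ n and t ≤ s, and let α be a real number with 1 ≤ α ≤ B and t ≤ λ/α. Let 𝓑 be a family of exactly s subsets of {1,…,n}, each of cardinality at most B. Suppose that for every Q ⊆ {1,…,n} with |Q| = λ there exists a subfamily 𝓒 ⊆ 𝓑 with |𝓒| ≤ t such that Q ⊆ ⋃𝓒. Then, as real numbers, s ≥ (n·α/(e·λ·B))^α, where e = exp(1). -/
lemma desc_mul_pow (k m n : ℕ) (h : m ≤ n) :
    m.descFactorial k * n ^ k ≤ n.descFactorial k * m ^ k := by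
  induction k with
  | zero => simp
  | succ k ih =>
    rw [Nat.descFactorial_succ, Nat.descFactorial_succ, pow_succ, pow_succ]
    have h1 : (m - k) * n ≤ (n - k) * m := by
      rcases le_or_gt k m with hk | hk
      · rw [Nat.sub_mul, Nat.sub_mul]
        calc m * n - k * n ≤ m * n - k * m := Nat.sub_le_sub_left (Nat.mul_le_mul_left k h) _
          _ = n * m - k * m := by rw [Nat.mul_comm m n]
      · simp [Nat.sub_eq_zero_of_le hk.le]
    calc (m - k) * m.descFactorial k * (n ^ k * n)
        = ((m - k) * n) * (m.descFactorial k * n ^ k) := by ring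
      _ ≤ ((n - k) * m) * (n.descFactorial k * m ^ k) := Nat.mul_le_mul h1 ih
      _ = (n - k) * n.descFactorial k * (m ^ k * m) := by ring

lemma choose_mul_pow (k m n : ℕ) (h : m ≤ n) :
    m.choose k * n ^ k ≤ n.choose k * m ^ k := by
  have := desc_mul_pow k m n h
  rw [Nat.descFactorial_eq_factorial_mul_choose, Nat.descFactorial_eq_factorial_mul_choose,
    mul_assoc, mul_assoc] at this
  exact Nat.le_of_mul_le_mul_left this (Nat.factorial_pos k)

open Finset in
lemma union_card_le {n B : ℕ} (𝓒 : Finset (Finset (Fin n)))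
    (h : ∀ b ∈ 𝓒, b.card ≤ B) : (𝓒.sup id).card ≤ 𝓒.card * B := by
  rw [Finset.sup_eq_biUnion]
  calc (𝓒.biUnion id).card ≤ ∑ b ∈ 𝓒, (id b).card := Finset.card_biUnion_le
    _ ≤ 𝓒.card * B := by
        rw [← smul_eq_mul]
        exact Finset.sum_le_card_nsmul _ _ _ (fun b hb => h b hb)

open Finset in
lemma counting {n lam B s t : ℕ} (hts : t ≤ s)
    (𝓑 : Finset (Finset (Fin n))) (hcard : 𝓑.card = s)
    (hblocks : ∀ b ∈ 𝓑, b.card ≤ B)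
    (hwork : ∀ Q : Finset (Fin n), Q.card = lam →
      ∃ 𝓒 ⊆ 𝓑, 𝓒.card ≤ t ∧ Q ⊆ 𝓒.sup id) :
    n.choose lam ≤ s.choose t * (t * B).choose lam := by
  classical
  have hsub : (Finset.univ : Finset (Fin n)).powersetCard lam ⊆
      (𝓑.powersetCard t).biUnion (fun 𝓒 => (𝓒.sup id).powersetCard lam) := by
    intro Q hQ
    rw [Finset.mem_powersetCard_univ] at hQ
    obtain ⟨𝓒, h𝓒𝓑, h𝓒t, hQ𝓒⟩ := hwork Q hQ
    obtain ⟨𝓒', h1, h2, h3⟩ := Finset.exists_subsuperset_card_eq h𝓒𝓑 h𝓒t (hcard ▸ hts)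
    refine Finset.mem_biUnion.mpr ⟨𝓒', Finset.mem_powersetCard.mpr ⟨h2, h3⟩,
      Finset.mem_powersetCard.mpr ⟨hQ𝓒.trans (Finset.sup_mono h1), hQ⟩⟩
  calc n.choose lam = ((Finset.univ : Finset (Fin n)).powersetCard lam).card := by
        rw [Finset.card_powersetCard, Finset.card_univ, Fintype.card_fin]
    _ ≤ ((𝓑.powersetCard t).biUnion (fun 𝓒 => (𝓒.sup id).powersetCard lam)).card :=
        Finset.card_le_card hsub
    _ ≤ ∑ 𝓒 ∈ 𝓑.powersetCard t, ((𝓒.sup id).powersetCard lam).card :=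
        Finset.card_biUnion_le
    _ ≤ ∑ 𝓒 ∈ 𝓑.powersetCard t, (t * B).choose lam := by
        refine Finset.sum_le_sum fun 𝓒 h𝓒 => ?_
        rw [Finset.mem_powersetCard] at h𝓒
        rw [Finset.card_powersetCard]
        refine Nat.choose_le_choose _ ?_
        calc (𝓒.sup id).card ≤ 𝓒.card * B :=
              union_card_le 𝓒 (fun b hb => hblocks b (h𝓒.1 hb))
          _ = t * B := by rw [h𝓒.2]
    _ = s.choose t * (t * B).choose lam := by
        rw [Finset.sum_const, Finset.card_powersetCard, hcard, smul_eq_mul]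

/-- space lower bound for the exact λ-set workload with
query time `t ≤ λ/α`. -/
theorem exact_set_workload_space_lower_bound
    (n lam B s t : ℕ) (α : ℝ) (hn : 0 < n) (hlam : 0 < lam) (hB : 0 < B)
    (hs : 0 < s) (ht : 0 < t) (hln : lam ≤ n) (hts : t ≤ s)
    (hα1 : 1 ≤ α) (hαB : α ≤ (B : ℝ)) (htα : (t : ℝ) ≤ (lam : ℝ) / α)
    (𝓑 : Finset (Finset (Fin n))) (hcard : 𝓑.card = s)
    (hblocks : ∀ b ∈ 𝓑, b.card ≤ B)
    (hwork : ∀ Q : Finset (Fin n), Q.card = lam →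
      ∃ 𝓒 ⊆ 𝓑, 𝓒.card ≤ t ∧ Q ⊆ 𝓒.sup id) :
    (s : ℝ) ≥
      ((n : ℝ) * α / (Real.exp 1 * (lam : ℝ) * (B : ℝ))) ^ α := by
  have he : (0:ℝ) < Real.exp 1 := Real.exp_pos 1
  have he1 : (1:ℝ) ≤ Real.exp 1 := Real.one_le_exp (by norm_num)
  have hα0 : (0:ℝ) < α := lt_of_lt_of_le one_pos hα1
  have hn0 : (0:ℝ) < n := by exact_mod_cast hn
  have hB0 : (0:ℝ) < B := by exact_mod_cast hB
  have hl0 : (0:ℝ) < lam := by exact_mod_cast hlam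
  have ht0 : (0:ℝ) < t := by exact_mod_cast ht
  have hs0 : (0:ℝ) < s := by exact_mod_cast hs
  have htα' : (t:ℝ) * α ≤ lam := (le_div_iff₀ hα0).mp htα
  set y : ℝ := (n:ℝ) * α / ((lam:ℝ) * B) with hy
  have hy0 : 0 < y := by positivity
  have hbase : (n:ℝ) * α / (Real.exp 1 * lam * B) = y / Real.exp 1 := by
    rw [hy, div_div]
    congr 1
    ring
  rw [ge_iff_le, hbase]
  rcases le_or_gt ((n:ℝ) * α) (Real.exp 1 * lam * B) with hcase | hcase
  · -- easy case: the base is at most 1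
    have h1 : y / Real.exp 1 ≤ 1 := by
      rw [hy, div_div, div_le_one (by positivity)]
      nlinarith
    calc (y / Real.exp 1) ^ α ≤ 1 := Real.rpow_le_one (by positivity) h1 hα0.le
      _ ≤ (s:ℝ) := by exact_mod_cast hs
  · -- hard case
    -- λ ≤ t*B
    have hltB : lam ≤ t * B := by
      obtain ⟨Q, -, hQc⟩ := Finset.exists_subset_card_eq (s := (Finset.univ : Finset (Fin n))) (n := lam)
        (by simpa using hln)
      obtain ⟨𝓒, h𝓒𝓑, h𝓒t, hQ𝓒⟩ := hwork Q hQc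
      calc lam = Q.card := hQc.symm
        _ ≤ (𝓒.sup id).card := Finset.card_le_card hQ𝓒
        _ ≤ 𝓒.card * B := union_card_le 𝓒 (fun b hb => hblocks b (h𝓒𝓑 hb))
        _ ≤ t * B := Nat.mul_le_mul_right _ h𝓒t
    -- t*B < n
    have hmR : ((t:ℝ)) * B < n := by
      have h1 : (t:ℝ) * B ≤ (lam:ℝ) * B / α := by
        rw [le_div_iff₀ hα0]
        nlinarith
      have h2 : (lam:ℝ) * B / α < n := by
        rw [div_lt_iff₀ hα0]
        nlinarith [mul_nonneg (mul_nonneg (sub_nonneg.mpr he1) hl0.le) hB0.le]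
      linarith
    have hmn : t * B ≤ n := by
      have : ((t * B : ℕ) : ℝ) < (n : ℝ) := by push_cast; exact hmR
      exact_mod_cast this.le
    have hpos : 0 < (t * B).choose lam := Nat.choose_pos hltB
    have Fc := counting hts 𝓑 hcard hblocks hwork
    have Fr := choose_mul_pow lam (t * B) n hmn
    have F3 : n ^ lam ≤ s.choose t * (t * B) ^ lam := by
      refine Nat.le_of_mul_le_mul_left ?_ hpos
      calc (t * B).choose lam * n ^ lam ≤ n.choose lam * (t * B) ^ lam := Fr
        _ ≤ (s.choose t * (t * B).choose lam) * (t * B) ^ lam :=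
            Nat.mul_le_mul_right _ Fc
        _ = (t * B).choose lam * (s.choose t * (t * B) ^ lam) := by ring
    -- real versions
    have F3R : (n:ℝ) ^ lam ≤ (s.choose t : ℝ) * ((t:ℝ) * B) ^ lam := by
      exact_mod_cast F3
    have hfac : ((t:ℝ)) ^ t ≤ (t.factorial : ℝ) * Real.exp 1 ^ t := by
      have h1 := Real.pow_div_factorial_le_exp (x := (t:ℝ)) (by positivity) t
      have h2 : Real.exp (t:ℝ) = Real.exp 1 ^ t := by
        rw [← Real.exp_nat_mul]
        norm_num
      rw [h2, div_le_iff₀ (by positivity)] at h1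
      linarith [h1]
    have hdescR : (s.choose t : ℝ) * (t.factorial : ℝ) ≤ (s:ℝ) ^ t := by
      have h1 : t.factorial * s.choose t ≤ s ^ t := by
        rw [← Nat.descFactorial_eq_factorial_mul_choose]
        exact Nat.descFactorial_le_pow s t
      have h2 := (Nat.cast_le (α := ℝ)).mpr h1
      push_cast at h2
      linarith
    have hchoose : (s.choose t : ℝ) * ((t:ℝ)) ^ t ≤ (s:ℝ) ^ t * Real.exp 1 ^ t := by
      calc (s.choose t : ℝ) * ((t:ℝ)) ^ t
          ≤ (s.choose t : ℝ) * ((t.factorial : ℝ) * Real.exp 1 ^ t) :=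
            mul_le_mul_of_nonneg_left hfac (Nat.cast_nonneg _)
        _ = ((s.choose t : ℝ) * (t.factorial : ℝ)) * Real.exp 1 ^ t := by ring
        _ ≤ (s:ℝ) ^ t * Real.exp 1 ^ t :=
            mul_le_mul_of_nonneg_right hdescR (pow_nonneg he.le t)
    set x : ℝ := (n:ℝ) / ((t:ℝ) * B) with hxdef
    set Z : ℝ := Real.exp 1 * s / t with hZdef
    have hx1 : 1 < x := by
      rw [hxdef, lt_div_iff₀ (by positivity)]
      linarith
    have hx0 : (0:ℝ) < x := lt_trans one_pos hx1
    have hZ0 : (0:ℝ) < Z := by rw [hZdef]; positivity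
    have hkey : x ^ (lam : ℕ) ≤ Z ^ (t : ℕ) := by
      rw [hxdef, hZdef, div_pow, div_pow, mul_pow, div_le_div_iff₀ (by positivity) (by positivity)]
      calc (n:ℝ) ^ lam * (t:ℝ) ^ t ≤ ((s.choose t : ℝ) * ((t:ℝ) * B) ^ lam) * (t:ℝ) ^ t :=
            mul_le_mul_of_nonneg_right F3R (pow_nonneg ht0.le t)
        _ = ((s.choose t : ℝ) * (t:ℝ) ^ t) * ((t:ℝ) * B) ^ lam := by ring
        _ ≤ ((s:ℝ) ^ t * Real.exp 1 ^ t) * ((t:ℝ) * B) ^ lam :=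
            mul_le_mul_of_nonneg_right hchoose (pow_nonneg (mul_pos ht0 hB0).le lam)
        _ = (Real.exp 1 * (s:ℝ)) ^ t * ((t:ℝ) ^ lam * (B:ℝ) ^ lam) := by
            rw [mul_pow, mul_pow]; ring
    have hrp : x ^ (lam : ℝ) ≤ Z ^ (t : ℝ) := by
      rw [Real.rpow_natCast, Real.rpow_natCast]
      exact hkey
    have step1 : x ^ ((lam : ℝ) * (1 / (t:ℝ))) ≤ Z := by
      have h := Real.rpow_le_rpow (by positivity) hrp (by positivity : (0:ℝ) ≤ 1 / t)
      rwa [← Real.rpow_mul hx0.le, ← Real.rpow_mul hZ0.le,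
        mul_one_div_cancel (ne_of_gt ht0), Real.rpow_one] at h
    have step2 : x ^ α ≤ x ^ ((lam : ℝ) * (1 / (t:ℝ))) := by
      refine Real.rpow_le_rpow_of_exponent_le hx1.le ?_
      rw [mul_one_div, le_div_iff₀ ht0]
      linarith [htα']
    have hyx : y ≤ x := by
      rw [hy, hxdef, div_le_div_iff₀ (by positivity) (by positivity)]
      calc (n:ℝ) * α * ((t:ℝ) * B) = (n:ℝ) * B * ((t:ℝ) * α) := by ring
        _ ≤ (n:ℝ) * B * lam := mul_le_mul_of_nonneg_left htα' (by positivity)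
        _ = (n:ℝ) * ((lam:ℝ) * B) := by ring
    have step3 : y ^ α ≤ x ^ α := Real.rpow_le_rpow hy0.le hyx hα0.le
    have hfin : y ^ α ≤ Real.exp 1 * s := by
      have h1 : y ^ α ≤ Z := le_trans step3 (le_trans step2 step1)
      rw [hZdef, le_div_iff₀ ht0] at h1
      have hy1 : y ^ α ≤ y ^ α * t :=
        le_mul_of_one_le_right (Real.rpow_pos_of_pos hy0 α).le (by exact_mod_cast ht)
      linarith
    calc (y / Real.exp 1) ^ α = y ^ α / Real.exp 1 ^ α :=
          Real.div_rpow hy0.le he.le α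
      _ ≤ y ^ α / Real.exp 1 := by
          apply div_le_div_of_nonneg_left (Real.rpow_pos_of_pos hy0 α).le he
          calc Real.exp 1 = Real.exp 1 ^ (1:ℝ) := (Real.rpow_one _).symm
            _ ≤ Real.exp 1 ^ α := Real.rpow_le_rpow_of_exponent_le he1 hα1
      _ ≤ (s:ℝ) := by
          rw [div_le_iff₀ he]
          linarith [hfin]
end

section
/- Let n, d, k, δ be positive integers and let Γ be a function from {1,…,n} to subsets of {1,…,d} with |Γ(i)| = δ for every i. Assume the expansion property: for every S ⊆ {1,…,n} with |S| ≤ 2k one has 3·|Γ(S)| ≥ 2·δ·|S|, where Γ(S) := ⋃_{i∈S} Γ(i). For i ∈ {1,…,n} define p_i ∈ ℝᵈ by (p_i)_j = 1 if j ∈ Γ(i) and 0 otherwise, and for I ⊆ {1,…,n} with |I| = k define q_I ∈ ℝᵈ by (q_I)_j = 1/2 if j ∈ Γ(I) and −1/2 otherwise. Then, with ‖·‖∞ the supremum norm on ℝᵈ: (a) ‖p_i − q_I‖∞ = 1/2 for every i ∈ I; (b) ‖p_i − q_I‖∞ = 3/2 for every i with Γ(i) ⊄ Γ(I); and (c) the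 set I' := {i ∈ {1,…,n} : ‖p_i − q_I‖∞ ≤ 1/2} satisfies I ⊆ I' and 2·|I'| ≤ 3·k. -/
/-- expander-based point set in `ℓ∞` gives a relaxed `k`-set
workload in dimension `d`. -/
theorem linfty_expander_relaxed_workload
    (n d k δ : ℕ) (hn : 0 < n) (hd : 0 < d) (hk : 0 < k) (hδ : 0 < δ)
    (Γ : Fin n → Finset (Fin d)) (hdeg : ∀ i, (Γ i).card = δ)
    (hexp : ∀ S : Finset (Fin n), S.card ≤ 2 * k →
      2 * δ * S.card ≤ 3 * (S.biUnion Γ).card)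
    (p : Fin n → (Fin d → ℝ))
    (hp : ∀ i j, p i j = if j ∈ Γ i then 1 else 0)
    (q : Finset (Fin n) → (Fin d → ℝ))
    (hq : ∀ I j, q I j = if j ∈ I.biUnion Γ then 1/2 else -1/2) :
    ∀ I : Finset (Fin n), I.card = k →
      (∀ i ∈ I, ‖p i - q I‖ = 1/2) ∧
      (∀ i : Fin n, ¬ Γ i ⊆ I.biUnion Γ → ‖p i - q I‖ = 3/2) ∧
      (∀ I' : Finset (Fin n), (∀ i, i ∈ I' ↔ ‖p i - q I‖ ≤ 1/2) →
        I ⊆ I' ∧ 2 * I'.card ≤ 3 * k) := by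
  intro I hI
  have habs : ∀ i : Fin n, ∀ j : Fin d,
      |(p i - q I) j| = if j ∈ Γ i ∧ j ∉ I.biUnion Γ then 3/2 else 1/2 := by
    intro i j
    simp only [Pi.sub_apply, hp, hq]
    by_cases h1 : j ∈ Γ i <;> by_cases h2 : j ∈ I.biUnion Γ <;>
      simp only [h1, h2, if_true, if_false, if_pos, if_neg, not_false_iff] <;>
      rw [abs_eq (by norm_num)] <;> norm_num
  -- part (a)
  have partA : ∀ i ∈ I, ‖p i - q I‖ = 1/2 := by
    intro i hi
    have hsub : Γ i ⊆ I.biUnion Γ := Finset.subset_biUnion_of_mem Γ hi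
    have hall : ∀ j : Fin d, |(p i - q I) j| = 1/2 := by
      intro j
      rw [habs]
      simp only [ite_eq_right_iff]
      intro ⟨h1, h2⟩
      exact absurd (hsub h1) h2
    refine le_antisymm ?_ ?_
    · apply (pi_norm_le_iff_of_nonneg (by norm_num : (0:ℝ) ≤ 1/2)).2
      intro j; rw [Real.norm_eq_abs, hall j]
    · calc (1:ℝ)/2 = |(p i - q I) ⟨0, hd⟩| := (hall _).symm
        _ = ‖(p i - q I) ⟨0, hd⟩‖ := (Real.norm_eq_abs _).symm
        _ ≤ ‖p i - q I‖ := norm_le_pi_norm _ _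
  -- part (b)
  have partB : ∀ i : Fin n, ¬ Γ i ⊆ I.biUnion Γ → ‖p i - q I‖ = 3/2 := by
    intro i hns
    obtain ⟨j, hj1, hj2⟩ := Finset.not_subset.1 hns
    refine le_antisymm ?_ ?_
    · apply pi_norm_le_iff_of_nonneg (by norm_num : (0:ℝ) ≤ 3/2) |>.2
      intro j'
      rw [Real.norm_eq_abs, habs]
      split <;> norm_num
    · calc (3:ℝ)/2 = |(p i - q I) j| := by rw [habs]; simp [hj1, hj2]
        _ = ‖(p i - q I) j‖ := (Real.norm_eq_abs _).symm
        _ ≤ ‖p i - q I‖ := norm_le_pi_norm _ _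
  refine ⟨partA, partB, ?_⟩
  intro I' hI'
  have hIsub : I ⊆ I' := fun i hi => (hI' i).2 (le_of_eq (partA i hi))
  have hΓsub : ∀ i ∈ I', Γ i ⊆ I.biUnion Γ := by
    intro i hi
    by_contra hns
    have h1 := (hI' i).1 hi
    rw [partB i hns] at h1
    norm_num at h1
  have hΓI : (I.biUnion Γ).card ≤ k * δ := by
    calc (I.biUnion Γ).card ≤ ∑ i ∈ I, (Γ i).card := Finset.card_biUnion_le
      _ = k * δ := by simp [hdeg, hI]
  refine ⟨hIsub, ?_⟩
  by_cases hcard : I'.card ≤ 2 * k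
  · have h1 := hexp I' hcard
    have h2 : (I'.biUnion Γ).card ≤ k * δ := by
      refine le_trans (Finset.card_le_card ?_) hΓI
      exact Finset.biUnion_subset.2 hΓsub
    have h3 : 2 * δ * I'.card ≤ 3 * (k * δ) := le_trans h1 (by omega)
    have hδ' : δ * (2 * I'.card) ≤ δ * (3 * k) := by
      calc δ * (2 * I'.card) = 2 * δ * I'.card := by ring
        _ ≤ 3 * (k * δ) := h3
        _ = δ * (3 * k) := by ring
    exact Nat.le_of_mul_le_mul_left hδ' hδ
  · exfalso
    obtain ⟨S, hS1, hS2⟩ := Finset.exists_subset_card_eq (le_of_lt (Nat.lt_of_not_le hcard))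
    have h1 := hexp S (le_of_eq hS2)
    have h2 : (S.biUnion Γ).card ≤ k * δ := by
      refine le_trans (Finset.card_le_card ?_) hΓI
      exact Finset.biUnion_subset.2 fun i hi => hΓsub i (hS1 hi)
    rw [hS2] at h1
    nlinarith [h1, h2, hk, hδ]
end

section
/- There exists a constant C > 0 such that the following holds. Let n, k, B be positive integers with k even and 2 ≤ k ≤ n/2, let α be a real number with 1 ≤ α ≤ B, and let c be a real number with 0 ≤ c < 3. Then there exist a positive integer d ≤ C·k·log(2n/k) and a set P of n points in ℝᵈ (with the supremum norm) with the following property: for every positive integer t with t ≤ k/α, and every finite family 𝓑 of subsets of P, each of cardinality at most B, with t ≤ |𝓑|, such that for every q ∈ ℝᵈ there exist a subfamily 𝓒 ⊆ 𝓑 with |𝓒| ≤ t and a set S ⊆ ⋃𝓒 with |S| = k and ‖q − x‖∞ ≤ c·r for all x ∈ S, where r is the k-nearest-neighbor radius of q in P, one has |𝓑| ≥ ((1/(2e))·√(n·α/(k·B)))^α. -/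
/-- `r` is the `k`-nearest-neighbor radius of `q` in the finite point set `P`:
there is a set `T ⊆ P` of `k` points of `P` closest to `q`, and `r` is the
largest distance from `q` to a point of `T`. -/
def IsKNNRadius {M : Type*} [MetricSpace M] (P : Finset M) (k : ℕ) (q : M)
    (r : ℝ) : Prop :=
  ∃ T ⊆ P, T.card = k ∧
    (∀ x ∈ T, ∀ y ∈ P, y ∉ T → dist q x ≤ dist q y) ∧
    (∀ x ∈ T, dist q x ≤ r) ∧ (∃ x ∈ T, dist q x = r)


namespace KNN

/-- coordinate decoding -/
def ec (k m : ℕ) : Fin (k * (m * 2)) ≃ Fin k × (Fin m × Fin 2) :=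
  finProdFinEquiv.symm.trans
    ((Equiv.refl (Fin k)).prodCongr finProdFinEquiv.symm)

/-- the bit condition -/
def bcond (i : ℕ) (p : Fin m × Fin 2) : Prop :=
  i.testBit (p.1 : ℕ) = decide ((p.2 : ℕ) = 1)

instance (i : ℕ) (p : Fin m × Fin 2) : Decidable (bcond i p) := by
  unfold bcond; infer_instance

/-- encode a bit as an element of `Fin 2` -/
def bfin (i t : ℕ) : Fin 2 := if i.testBit t then 1 else 0

lemma bcond_bfin_iff (i' i : ℕ) (t : Fin m) :
    bcond i' (t, bfin i t) ↔ (i'.testBit t = i.testBit t) := by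
  unfold bcond bfin
  by_cases h : i.testBit t <;> simp [h]

lemma bcond_bfin_self (i : ℕ) (t : Fin m) : bcond i (t, bfin i t) :=
  (bcond_bfin_iff i i t).2 rfl

/-- data point in column `j` with index `i` -/
noncomputable def pt (k u m : ℕ) (j : Fin k) (i : Fin u) : Fin (k * (m * 2)) → ℝ :=
  fun cc => if (ec k m cc).1 = j ∧ bcond (i : ℕ) (ec k m cc).2 then 2 else 0

/-- query point associated with a transversal `κ` -/
noncomputable def qv (k u m : ℕ) (κ : Fin k → Fin u) : Fin (k * (m * 2)) → ℝ :=
  fun cc => if bcond ((κ (ec k m cc).1 : ℕ)) (ec k m cc).2 then 1 else -1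

/-- leftover far-away points -/
noncomputable def wv (k m : ℕ) (s : ℕ) : Fin (k * (m * 2)) → ℝ :=
  fun _ => (s : ℝ) + 10

lemma pt_symm_apply (k u m : ℕ) (j : Fin k) (i : Fin u) (j' : Fin k) (p : Fin m × Fin 2) :
    pt k u m j i ((ec k m).symm (j', p)) = if j' = j ∧ bcond (i : ℕ) p then 2 else 0 := by
  simp [pt]

lemma qv_symm_apply (k u m : ℕ) (κ : Fin k → Fin u) (j : Fin k) (p : Fin m × Fin 2) :
    qv k u m κ ((ec k m).symm (j, p)) = if bcond ((κ j : ℕ)) p then 1 else -1 := by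
  simp [qv]

lemma dist_coord_qv_pt (k u m : ℕ) (κ : Fin k → Fin u) (j : Fin k)
    (cc : Fin (k * (m * 2))) :
    dist (qv k u m κ cc) (pt k u m j (κ j) cc) = 1 := by
  unfold qv pt
  by_cases h1 : (ec k m cc).1 = j
  · rw [h1]
    by_cases h2 : bcond ((κ j : ℕ)) (ec k m cc).2 <;>
      simp [h2, Real.dist_eq] <;> norm_num
  · have : ¬ ((ec k m cc).1 = j ∧ bcond ((κ (ec k m cc).1 : ℕ)) (ec k m cc).2) := by
      tauto
    by_cases h2 : bcond ((κ (ec k m cc).1 : ℕ)) (ec k m cc).2 <;>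
      simp [h1, h2, Real.dist_eq] <;> norm_num

lemma exists_testBit_ne {u m : ℕ} (hu : u ≤ 2 ^ m) (i i' : Fin u) (h : i ≠ i') :
    ∃ t : Fin m, ((i : ℕ)).testBit t ≠ ((i' : ℕ)).testBit t := by
  by_contra hc
  push_neg at hc
  apply h
  apply Fin.ext
  apply Nat.eq_of_testBit_eq
  intro t
  by_cases ht : t < m
  · exact hc ⟨t, ht⟩
  · push_neg at ht
    have h2 : (2:ℕ) ^ m ≤ 2 ^ t := Nat.pow_le_pow_right (by norm_num) ht
    rw [Nat.testBit_eq_false_of_lt (lt_of_lt_of_le i.2 (le_trans hu h2)),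
      Nat.testBit_eq_false_of_lt (lt_of_lt_of_le i'.2 (le_trans hu h2))]

lemma dist_qv_pt (k u m : ℕ) (hd : 0 < k * (m * 2)) (κ : Fin k → Fin u) (j : Fin k) :
    dist (qv k u m κ) (pt k u m j (κ j)) = 1 := by
  refine le_antisymm ((dist_pi_le_iff zero_le_one).2 fun cc =>
    le_of_eq (dist_coord_qv_pt k u m κ j cc)) ?_
  have h := dist_le_pi_dist (qv k u m κ) (pt k u m j (κ j)) ⟨0, hd⟩
  rw [dist_coord_qv_pt k u m κ j ⟨0, hd⟩] at h
  exact h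

lemma three_le_dist_qv_pt {k u m : ℕ} (hu : u ≤ 2 ^ m) (κ : Fin k → Fin u)
    (j : Fin k) (i : Fin u) (h : i ≠ κ j) :
    3 ≤ dist (qv k u m κ) (pt k u m j i) := by
  obtain ⟨t, ht⟩ := exists_testBit_ne hu i (κ j) h
  set cc := (ec k m).symm (j, t, bfin (i : ℕ) t) with hcc
  have hq : qv k u m κ cc = -1 := by
    rw [hcc, qv_symm_apply]
    rw [if_neg]
    rw [bcond_bfin_iff]
    exact fun hh => ht hh.symm
  have hp : pt k u m j i cc = 2 := by
    rw [hcc, pt_symm_apply, if_pos ⟨rfl, bcond_bfin_self _ _⟩]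
  have hle := dist_le_pi_dist (qv k u m κ) (pt k u m j i) cc
  rw [hq, hp, Real.dist_eq] at hle
  norm_num at hle
  exact hle

lemma nine_le_dist_qv_wv (k u m : ℕ) (hd : 0 < k * (m * 2)) (κ : Fin k → Fin u) (s : ℕ) :
    9 ≤ dist (qv k u m κ) (wv k m s) := by
  have hle := dist_le_pi_dist (qv k u m κ) (wv k m s) ⟨0, hd⟩
  refine le_trans ?_ hle
  have hs : (0:ℝ) ≤ (s : ℝ) := Nat.cast_nonneg s
  unfold wv qv
  rw [Real.dist_eq, abs_sub_comm, abs_of_nonneg] <;> split_ifs <;> linarith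

lemma pt_injective {k u m : ℕ} (hm : 0 < m) (hu : u ≤ 2 ^ m) :
    Function.Injective (fun p : Fin k × Fin u => pt k u m p.1 p.2) := by
  rintro ⟨j, i⟩ ⟨j', i'⟩ hEq
  simp only at hEq
  have hj : j = j' := by
    by_contra hne
    have h2 := congrFun hEq ((ec k m).symm (j, ⟨0, hm⟩, bfin (i : ℕ) 0))
    rw [pt_symm_apply, pt_symm_apply, if_pos ⟨rfl, bcond_bfin_self _ _⟩,
      if_neg (fun hh => hne hh.1)] at h2
    norm_num at h2
  subst hj
  have hi : i = i' := by
    by_contra hne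
    obtain ⟨t, ht⟩ := exists_testBit_ne hu i i' hne
    have h2 := congrFun hEq ((ec k m).symm (j, t, bfin (i : ℕ) t))
    rw [pt_symm_apply, pt_symm_apply, if_pos ⟨rfl, bcond_bfin_self _ _⟩,
      if_neg] at h2
    · norm_num at h2
    · rintro ⟨-, hb⟩
      rw [bcond_bfin_iff] at hb
      exact ht hb.symm
  rw [hi]

lemma pt_ne_wv (k u m : ℕ) (hd : 0 < k * (m * 2)) (j : Fin k) (i : Fin u) (s : ℕ) :
    pt k u m j i ≠ wv k m s := by
  intro hEq
  have h2 := congrFun hEq ⟨0, hd⟩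
  have hs : (0:ℝ) ≤ (s : ℝ) := Nat.cast_nonneg s
  unfold pt wv at h2
  split_ifs at h2 <;> linarith
  

end KNN



lemma pow_self_le_exp_pow_mul_factorial (a : ℕ) :
    (a : ℝ) ^ a ≤ Real.exp 1 ^ a * (a.factorial : ℝ) := by
  induction a with
  | zero => simp
  | succ n ih =>
    rcases Nat.eq_zero_or_pos n with hn | hn
    · subst hn
      simpa using Real.one_le_exp (by norm_num : (0:ℝ) ≤ 1)
    · have hn' : (0:ℝ) < (n : ℝ) := by exact_mod_cast hn
      have h1 : ((n : ℝ) + 1) ^ n ≤ Real.exp 1 * (n : ℝ) ^ n := by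
        have hsplit : ((n : ℝ) + 1) = (1 + 1 / n) * n := by field_simp
        have hexp : (1 + 1 / (n:ℝ)) ^ n ≤ Real.exp 1 := by
          have h2 : (1 + 1 / (n:ℝ)) ≤ Real.exp (1 / n) := by
            have := Real.add_one_le_exp (1 / (n:ℝ)); linarith
          have h3 : (1 + 1 / (n:ℝ)) ^ n ≤ Real.exp (1/(n:ℝ)) ^ n :=
            pow_le_pow_left₀ (by positivity) h2 n
          rwa [← Real.exp_nat_mul, mul_one_div, div_self (ne_of_gt hn')] at h3
        calc ((n : ℝ) + 1) ^ n = (1 + 1 / n) ^ n * (n:ℝ) ^ n := by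
              rw [hsplit, mul_pow]
          _ ≤ Real.exp 1 * (n:ℝ) ^ n := by
              apply mul_le_mul_of_nonneg_right hexp (by positivity)
      have hcast : ((n + 1 : ℕ) : ℝ) = (n : ℝ) + 1 := by push_cast; ring
      calc ((n + 1 : ℕ) : ℝ) ^ (n + 1) = ((n:ℝ) + 1) * ((n:ℝ) + 1) ^ n := by
            rw [hcast, pow_succ]; ring
        _ ≤ ((n:ℝ) + 1) * (Real.exp 1 * (n:ℝ) ^ n) := by
            apply mul_le_mul_of_nonneg_left h1 (by positivity)
        _ ≤ ((n:ℝ) + 1) * (Real.exp 1 * (Real.exp 1 ^ n * n.factorial)) := by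
            apply mul_le_mul_of_nonneg_left _ (by positivity)
            apply mul_le_mul_of_nonneg_left ih (le_of_lt (Real.exp_pos 1))
        _ = Real.exp 1 ^ (n + 1) * ((n + 1).factorial : ℝ) := by
            rw [Nat.factorial_succ]
            push_cast
            ring

lemma choose_mul_pow_le (B a : ℕ) :
    (B.choose a : ℝ) * (a : ℝ) ^ a ≤ (B : ℝ) ^ a * Real.exp 1 ^ a := by
  have h1 : (a.factorial : ℝ) * (B.choose a : ℝ) ≤ (B : ℝ) ^ a := by
    have := Nat.descFactorial_le_pow B a
    rw [Nat.descFactorial_eq_factorial_mul_choose] at this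
    exact_mod_cast this
  have h2 := pow_self_le_exp_pow_mul_factorial a
  have hC : (0:ℝ) ≤ (B.choose a : ℝ) := Nat.cast_nonneg _
  calc (B.choose a : ℝ) * (a : ℝ) ^ a
      ≤ (B.choose a : ℝ) * (Real.exp 1 ^ a * a.factorial) :=
        mul_le_mul_of_nonneg_left h2 hC
    _ = Real.exp 1 ^ a * ((a.factorial : ℝ) * (B.choose a : ℝ)) := by ring
    _ ≤ Real.exp 1 ^ a * (B : ℝ) ^ a :=
        mul_le_mul_of_nonneg_left h1 (by positivity)
    _ = (B : ℝ) ^ a * Real.exp 1 ^ a := by ring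



set_option maxHeartbeats 1000000 in
lemma main_construction (n k B : ℕ) (hk2 : 2 ≤ k) (hB : 0 < B) (hkn : 2 * k ≤ n)
    (α : ℝ) (hα1 : 1 ≤ α) (hαB : α ≤ (B : ℝ)) (c : ℝ) (hc3 : c < 3) :
    ∃ d : ℕ, 0 < d ∧ (d : ℝ) ≤ 4 * k * Real.log (2 * (n : ℝ) / k) ∧
      ∃ P : Finset (Fin d → ℝ), P.card = n ∧
        ∀ t : ℕ, 0 < t → (t : ℝ) ≤ (k : ℝ) / α →
        ∀ 𝓑 : Finset (Finset (Fin d → ℝ)),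
          (∀ b ∈ 𝓑, b ⊆ P ∧ b.card ≤ B) → t ≤ 𝓑.card →
          (∀ q : Fin d → ℝ, ∀ r : ℝ, IsKNNRadius P k q r →
            ∃ 𝓒 ⊆ 𝓑, 𝓒.card ≤ t ∧
              ∃ S ⊆ 𝓒.sup id, S.card = k ∧ ∀ x ∈ S, dist q x ≤ c * r) →
          (𝓑.card : ℝ) ≥
            ((1 / (2 * Real.exp 1)) *
              Real.sqrt ((n : ℝ) * α / ((k : ℝ) * (B : ℝ)))) ^ α := by
  classical
  have hk0 : 0 < k := lt_of_lt_of_le two_pos hk2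
  have hn0 : 0 < n := lt_of_lt_of_le (by positivity) hkn
  set u := n / k with hu_def
  have hu2 : 2 ≤ u := (Nat.le_div_iff_mul_le hk0).2 (by linarith)
  have hu0 : 0 < u := lt_of_lt_of_le two_pos hu2
  set m := Nat.log2 u + 1 with hm_def
  have hm0 : 0 < m := Nat.succ_pos _
  have hu2m : u ≤ 2 ^ m := le_of_lt Nat.lt_log2_self
  have hd0 : 0 < k * (m * 2) := by positivity
  have hα0 : (0:ℝ) < α := lt_of_lt_of_le one_pos hα1
  have hk0' : (0:ℝ) < (k:ℝ) := by exact_mod_cast hk0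
  have hu0' : (0:ℝ) < (u:ℝ) := by exact_mod_cast hu0
  have hn0' : (0:ℝ) < (n:ℝ) := by exact_mod_cast hn0
  refine ⟨k * (m * 2), hd0, ?_, ?_⟩
  · -- dimension bound
    have h2m : ((2:ℝ)) ^ m ≤ 2 * u := by
      have h1 : (2:ℕ) ^ m ≤ 2 * u := by
        have h2 := Nat.log2_self_le (show u ≠ 0 by omega)
        rw [hm_def, pow_succ]
        omega
      exact_mod_cast h1
    have hukr : (u:ℝ) ≤ (n:ℝ) / k := by
      rw [hu_def]; exact Nat.cast_div_le
    have hL1 : (m:ℝ) * Real.log 2 ≤ Real.log (2 * (n:ℝ) / k) := by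
      rw [← Real.log_pow]
      apply Real.log_le_log (by positivity)
      calc ((2:ℝ)) ^ m ≤ 2 * u := h2m
        _ ≤ 2 * ((n:ℝ)/k) := by linarith
        _ = 2 * (n:ℝ) / k := by ring
    have hlog2 : (0.5:ℝ) ≤ Real.log 2 := by
      have := Real.log_two_gt_d9; linarith
    have hm' : (m:ℝ) ≤ 2 * Real.log (2 * (n:ℝ) / k) := by nlinarith [Nat.cast_nonneg (α := ℝ) m]
    have hdim : ((k * (m * 2) : ℕ) : ℝ) = (k:ℝ) * (m:ℝ) * 2 := by push_cast; ring
    rw [hdim]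
    nlinarith [mul_le_mul_of_nonneg_left hm' (le_of_lt hk0')]
  · -- the point set
    set Pmain : Finset (Fin (k * (m * 2)) → ℝ) :=
      Finset.univ.image (fun p : Fin k × Fin u => KNN.pt k u m p.1 p.2) with hPmain_def
    set Pextra : Finset (Fin (k * (m * 2)) → ℝ) :=
      Finset.univ.image (fun s : Fin (n - k * u) => KNN.wv k m (s : ℕ)) with hPextra_def
    set P : Finset (Fin (k * (m * 2)) → ℝ) := Pmain ∪ Pextra with hP_def
    have hkun : k * u ≤ n := by
      rw [hu_def, mul_comm]; exact Nat.div_mul_le_self n k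
    have hPmain_card : Pmain.card = k * u := by
      rw [hPmain_def, Finset.card_image_of_injective _ (KNN.pt_injective hm0 hu2m)]
      simp
    have hPextra_card : Pextra.card = n - k * u := by
      rw [hPextra_def, Finset.card_image_of_injective _ ?_]
      · simp
      · intro s s' hss
        have h2 := congrFun hss ⟨0, hd0⟩
        simp only [KNN.wv] at h2
        have : ((s:ℕ):ℝ) = ((s':ℕ):ℝ) := by linarith
        exact Fin.ext (by exact_mod_cast this)
    have hdisj : Disjoint Pmain Pextra := by
      rw [Finset.disjoint_left]
      intro x hx1 hx2
      rw [hPmain_def, Finset.mem_image] at hx1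
      rw [hPextra_def, Finset.mem_image] at hx2
      obtain ⟨p, -, hp⟩ := hx1
      obtain ⟨s, -, hs⟩ := hx2
      exact KNN.pt_ne_wv k u m hd0 p.1 p.2 (s:ℕ) (hp.trans hs.symm)
    have hPcard : P.card = n := by
      rw [hP_def, Finset.card_union_of_disjoint hdisj, hPmain_card, hPextra_card]
      omega
    refine ⟨P, hPcard, ?_⟩
    intro t ht0 htk 𝓑 h𝓑 ht𝓑 hq
    -- designated answer sets
    set K : (Fin k → Fin u) → Finset (Fin (k * (m * 2)) → ℝ) :=
      fun κ => Finset.univ.image (fun j => KNN.pt k u m j (κ j)) with hK_def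
    have hptκ_inj : ∀ κ : Fin k → Fin u,
        Function.Injective (fun j => KNN.pt k u m j (κ j)) := by
      intro κ j1 j2 h12
      have := KNN.pt_injective (k := k) hm0 hu2m (a₁ := (j1, κ j1)) (a₂ := (j2, κ j2)) h12
      exact (Prod.mk.injEq _ _ _ _ ▸ this).1
    have hKcard : ∀ κ, (K κ).card = k := by
      intro κ
      rw [hK_def]
      rw [Finset.card_image_of_injective _ (hptκ_inj κ)]
      simp
    have hKP : ∀ κ, K κ ⊆ P := by
      intro κ x hx
      rw [hK_def, Finset.mem_image] at hx
      obtain ⟨j, -, hj⟩ := hx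
      rw [hP_def]
      apply Finset.mem_union_left
      rw [hPmain_def, Finset.mem_image]
      exact ⟨(j, κ j), Finset.mem_univ _, hj⟩
    have hmemK : ∀ (κ : Fin k → Fin u) (j : Fin k) (i : Fin u),
        KNN.pt k u m j i ∈ K κ → i = κ j := by
      intro κ j i hmem
      rw [hK_def, Finset.mem_image] at hmem
      obtain ⟨j', -, hj'⟩ := hmem
      have := KNN.pt_injective (k := k) hm0 hu2m
        (a₁ := (j', κ j')) (a₂ := (j, i)) hj'
      rw [Prod.mk.injEq] at this
      rcases this with ⟨h1, h2⟩
      rw [← h2, h1]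
    -- distances from the query to the points of P
    have hdistP : ∀ (κ : Fin k → Fin u) (y : Fin (k * (m * 2)) → ℝ),
        y ∈ P → y ∉ K κ → 3 ≤ dist (KNN.qv k u m κ) y := by
      intro κ y hyP hyK
      rw [hP_def, Finset.mem_union] at hyP
      rcases hyP with hy | hy
      · rw [hPmain_def, Finset.mem_image] at hy
        obtain ⟨⟨j, i⟩, -, hji⟩ := hy
        have hne : i ≠ κ j := by
          intro hEq
          apply hyK
          rw [← hji, hK_def, Finset.mem_image]
          exact ⟨j, Finset.mem_univ _, by rw [hEq]⟩
        rw [← hji]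
        exact KNN.three_le_dist_qv_pt hu2m κ j i hne
      · rw [hPextra_def, Finset.mem_image] at hy
        obtain ⟨s, -, hs⟩ := hy
        rw [← hs]
        linarith [KNN.nine_le_dist_qv_wv k u m hd0 κ (s:ℕ)]
    have hdistK : ∀ (κ : Fin k → Fin u) (x : Fin (k * (m * 2)) → ℝ),
        x ∈ K κ → dist (KNN.qv k u m κ) x = 1 := by
      intro κ x hx
      rw [hK_def, Finset.mem_image] at hx
      obtain ⟨j, -, hj⟩ := hx
      rw [← hj]
      exact KNN.dist_qv_pt k u m hd0 κ j
    have hKNN : ∀ κ : Fin k → Fin u, IsKNNRadius P k (KNN.qv k u m κ) 1 := by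
      intro κ
      refine ⟨K κ, hKP κ, hKcard κ, ?_, ?_, ?_⟩
      · intro x hx y hy hyK
        rw [hdistK κ x hx]
        linarith [hdistP κ y hy hyK]
      · intro x hx; rw [hdistK κ x hx]
      · refine ⟨KNN.pt k u m ⟨0, hk0⟩ (κ ⟨0, hk0⟩), ?_, ?_⟩
        · rw [hK_def, Finset.mem_image]; exact ⟨⟨0, hk0⟩, Finset.mem_univ _, rfl⟩
        · exact hdistK κ _ (by
            rw [hK_def, Finset.mem_image]
            exact ⟨⟨0, hk0⟩, Finset.mem_univ _, rfl⟩)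
    -- the ceiling of α
    set a := ⌈α⌉₊ with ha_def
    have ha1 : 1 ≤ a := Nat.one_le_ceil_iff.2 (by linarith)
    have haB : a ≤ B := Nat.ceil_le.2 hαB
    have ht1 : (1:ℝ) ≤ (t:ℝ) := by exact_mod_cast ht0
    have htα : (t:ℝ) * α ≤ (k:ℝ) := (le_div_iff₀ hα0).1 htk
    have hαk : α ≤ (k:ℝ) := by
      have h6 : 1 * α ≤ (t:ℝ) * α := mul_le_mul_of_nonneg_right ht1 (le_of_lt hα0)
      linarith
    have hak : a ≤ k := Nat.ceil_le.2 hαk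
    -- step 1 : every query forces a large trace in some block
    have step1 : ∀ κ : Fin k → Fin u, ∃ b A, b ∈ 𝓑 ∧ A ∈ b.powersetCard a ∧ A ⊆ K κ := by
      intro κ
      obtain ⟨𝓒, h𝓒𝓑, h𝓒t, S, hSsub, hScard, hSdist⟩ := hq (KNN.qv k u m κ) 1 (hKNN κ)
      have hsupP : 𝓒.sup id ⊆ P := by
        show 𝓒.sup id ≤ P
        exact Finset.sup_le fun b hb => (h𝓑 b (h𝓒𝓑 hb)).1
      have hSK : S ⊆ K κ := by
        intro x hxS
        by_contra hxK
        have h3 := hdistP κ x (hsupP (hSsub hxS)) hxK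
        have h4 := hSdist x hxS
        rw [mul_one] at h4
        linarith
      have hSeq : S = K κ := Finset.eq_of_subset_of_card_le hSK
        (by rw [hKcard κ, hScard])
      have hcover : K κ ⊆ 𝓒.sup id := hSeq ▸ hSsub
      have hex : ∃ b ∈ 𝓒, a ≤ (b ∩ K κ).card := by
        by_contra hno
        push_neg at hno
        have hsub : K κ ⊆ 𝓒.biUnion (fun b => b ∩ K κ) := by
          intro x hx
          have := hcover hx
          rw [Finset.sup_eq_biUnion, Finset.mem_biUnion] at this
          obtain ⟨b, hb, hxb⟩ := this
          rw [Finset.mem_biUnion]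
          exact ⟨b, hb, Finset.mem_inter.2 ⟨hxb, hx⟩⟩
        have hsum : k ≤ ∑ b ∈ 𝓒, (b ∩ K κ).card := by
          calc k = (K κ).card := (hKcard κ).symm
            _ ≤ (𝓒.biUnion (fun b => b ∩ K κ)).card := Finset.card_le_card hsub
            _ ≤ ∑ b ∈ 𝓒, (b ∩ K κ).card := Finset.card_biUnion_le
        have hsum2 : ∑ b ∈ 𝓒, (b ∩ K κ).card ≤ 𝓒.card * (a - 1) := by
          calc ∑ b ∈ 𝓒, (b ∩ K κ).card ≤ 𝓒.card • (a - 1) :=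
              Finset.sum_le_card_nsmul _ _ _ (fun b hb => by
                have := hno b hb; omega)
            _ = 𝓒.card * (a - 1) := by rw [smul_eq_mul]
        have hccard : (𝓒.card : ℝ) ≤ (t:ℝ) := by exact_mod_cast h𝓒t
        have hka : (k:ℝ) ≤ (𝓒.card:ℝ) * ((a:ℝ) - 1) := by
          have h5 : (k:ℝ) ≤ ((𝓒.card * (a-1) : ℕ) : ℝ) := by
            exact_mod_cast le_trans hsum hsum2
          rw [Nat.cast_mul, Nat.cast_sub ha1] at h5
          push_cast at h5
          linarith
        have hta : (a:ℝ) - 1 < α := by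
          have := Nat.ceil_lt_add_one (le_of_lt hα0)
          rw [← ha_def] at this
          linarith
        have ha1' : (1:ℝ) ≤ (a:ℝ) := by exact_mod_cast ha1
        have h6 : (𝓒.card:ℝ) * ((a:ℝ) - 1) ≤ (t:ℝ) * ((a:ℝ) - 1) :=
          mul_le_mul_of_nonneg_right hccard (by linarith)
        have h7 : (t:ℝ) * ((a:ℝ) - 1) < (t:ℝ) * α :=
          mul_lt_mul_of_pos_left hta (by linarith)
        linarith
      obtain ⟨b, hb𝓒, hba⟩ := hex
      obtain ⟨A, hAsub, hAcard⟩ := Finset.exists_subset_card_eq hba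
      refine ⟨b, A, h𝓒𝓑 hb𝓒, ?_, hAsub.trans Finset.inter_subset_right⟩
      exact Finset.mem_powersetCard.2 ⟨hAsub.trans Finset.inter_subset_left, hAcard⟩
    choose fb fA hfb hfA hfAK using step1
    -- step 2 : counting
    set T𝓑 : Finset (Finset (Fin (k * (m * 2)) → ℝ) × Finset (Fin (k * (m * 2)) → ℝ)) :=
      𝓑.biUnion (fun b => (b.powersetCard a).image (fun A => (b, A))) with hT𝓑_def
    set F : (Fin k → Fin u) →
        (Finset (Fin (k * (m * 2)) → ℝ) × Finset (Fin (k * (m * 2)) → ℝ)) :=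
      fun κ => (fb κ, fA κ) with hF_def
    have hFmem : ∀ κ ∈ (Finset.univ : Finset (Fin k → Fin u)), F κ ∈ T𝓑 := by
      intro κ _
      rw [hT𝓑_def, Finset.mem_biUnion]
      exact ⟨fb κ, hfb κ, Finset.mem_image.2 ⟨fA κ, hfA κ, rfl⟩⟩
    have hfiber : ∀ p ∈ T𝓑,
        (Finset.univ.filter (fun κ : Fin k → Fin u => F κ = p)).card ≤ u ^ (k - a) := by
      intro p hp
      rcases (Finset.univ.filter (fun κ : Fin k → Fin u => F κ = p)).eq_empty_or_nonempty
        with he | ⟨κ₀, hκ₀⟩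
      · rw [he]; simp
      · have hκ₀' : F κ₀ = p := (Finset.mem_filter.1 hκ₀).2
        set A₀ := fA κ₀ with hA₀_def
        set J : Finset (Fin k) :=
          Finset.univ.filter (fun j => KNN.pt k u m j (κ₀ j) ∈ A₀) with hJ_def
        have hAeq : ∀ κ : Fin k → Fin u, F κ = p → fA κ = A₀ := by
          intro κ hκ
          have h5 : (F κ).2 = (F κ₀).2 := by rw [hκ, hκ₀']
          exact h5
        have hagree : ∀ κ : Fin k → Fin u, F κ = p → ∀ j ∈ J, κ j = κ₀ j := by
          intro κ hκ j hj
          rw [hJ_def, Finset.mem_filter] at hj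
          have h6 : KNN.pt k u m j (κ₀ j) ∈ fA κ := (hAeq κ hκ) ▸ hj.2
          have h7 : KNN.pt k u m j (κ₀ j) ∈ K κ := hfAK κ h6
          have h8 := hmemK κ j (κ₀ j) h7
          exact h8.symm
        have hJcard : J.card = a := by
          have hA₀K : A₀ ⊆ K κ₀ := hfAK κ₀
          have hA₀card : A₀.card = a := (Finset.mem_powersetCard.1 (hfA κ₀)).2
          rw [← hA₀card]
          apply Finset.card_bij (fun j _ => KNN.pt k u m j (κ₀ j))
          · intro j hj
            rw [hJ_def, Finset.mem_filter] at hj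
            exact hj.2
          · intro j1 h1 j2 h2 hEq
            exact hptκ_inj κ₀ hEq
          · intro x hx
            have := hA₀K hx
            rw [hK_def, Finset.mem_image] at this
            obtain ⟨j, -, hj⟩ := this
            refine ⟨j, ?_, hj⟩
            rw [hJ_def, Finset.mem_filter]
            exact ⟨Finset.mem_univ _, hj ▸ hx⟩
        calc (Finset.univ.filter (fun κ : Fin k → Fin u => F κ = p)).card
            ≤ (Finset.univ : Finset ({j // j ∈ Jᶜ} → Fin u)).card := by
              apply Finset.card_le_card_of_injOn
                (fun κ (j : {j // j ∈ Jᶜ}) => κ j.1)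
                (fun _ _ => Finset.mem_univ _)
              intro κ1 h1 κ2 h2 h12
              simp only [Finset.coe_filter, Set.mem_setOf_eq, Finset.mem_univ, true_and]
                at h1 h2
              funext j
              by_cases hj : j ∈ J
              · rw [hagree κ1 h1 j hj, hagree κ2 h2 j hj]
              · exact congrFun h12 ⟨j, Finset.mem_compl.2 hj⟩
          _ = u ^ (k - a) := by
              rw [Finset.card_univ, Fintype.card_fun]
              congr 1
              · simp
              · rw [Fintype.card_coe, Finset.card_compl, hJcard, Fintype.card_fin]
    have hcount : u ^ a ≤ 𝓑.card * B.choose a := by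
      have hl : u ^ k ≤ T𝓑.card * u ^ (k - a) := by
        have hcard_univ : (Finset.univ : Finset (Fin k → Fin u)).card = u ^ k := by
          rw [Finset.card_univ, Fintype.card_fun]; simp
        rw [← hcard_univ, Finset.card_eq_sum_card_fiberwise hFmem]
        calc ∑ p ∈ T𝓑, (Finset.univ.filter (fun κ : Fin k → Fin u => F κ = p)).card
            ≤ T𝓑.card • u ^ (k - a) := Finset.sum_le_card_nsmul _ _ _ hfiber
          _ = T𝓑.card * u ^ (k - a) := by rw [smul_eq_mul]
      have hT : T𝓑.card ≤ 𝓑.card * B.choose a := by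
        rw [hT𝓑_def]
        calc (𝓑.biUnion fun b => (b.powersetCard a).image (fun A => (b, A))).card
            ≤ ∑ b ∈ 𝓑, ((b.powersetCard a).image (fun A => (b, A))).card :=
              Finset.card_biUnion_le
          _ ≤ 𝓑.card • B.choose a := by
              apply Finset.sum_le_card_nsmul
              intro b hb
              refine le_trans Finset.card_image_le ?_
              rw [Finset.card_powersetCard]
              exact Nat.choose_le_choose a (h𝓑 b hb).2
          _ = 𝓑.card * B.choose a := by rw [smul_eq_mul]
      have hua : u ^ a * u ^ (k - a) ≤ (𝓑.card * B.choose a) * u ^ (k - a) := by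
        rw [← pow_add, Nat.add_sub_cancel' hak]
        exact le_trans hl (Nat.mul_le_mul_right _ hT)
      exact Nat.le_of_mul_le_mul_right hua (Nat.pow_pos hu0)
    -- step 3 : numerics
    set y := (1 / (2 * Real.exp 1)) * Real.sqrt ((n : ℝ) * α / ((k : ℝ) * (B : ℝ)))
      with hy_def
    have hy0 : 0 ≤ y := by rw [hy_def]; positivity
    have hcard1 : (1:ℝ) ≤ (𝓑.card : ℝ) := by exact_mod_cast le_trans ht0 ht𝓑
    rw [ge_iff_le]
    rcases le_or_gt y 1 with hy1 | hy1
    · exact le_trans (Real.rpow_le_one hy0 hy1 (by linarith)) hcard1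
    · have hexp := Real.rpow_le_rpow_of_exponent_le (le_of_lt hy1) (Nat.le_ceil α)
      rw [Real.rpow_natCast, ← ha_def] at hexp
      refine le_trans hexp ?_
      have he1 : (1:ℝ) ≤ Real.exp 1 := Real.one_le_exp zero_le_one
      have hB0' : (0:ℝ) < (B:ℝ) := by exact_mod_cast hB
      have hkB : (0:ℝ) < (k:ℝ) * B := by positivity
      have h2e0 : (0:ℝ) < 2 * Real.exp 1 := by positivity
      have h2e : 2 * Real.exp 1 < Real.sqrt ((n : ℝ) * α / ((k : ℝ) * (B : ℝ))) := by
        have h6 : (2 * Real.exp 1) * 1 < (2 * Real.exp 1) * y := by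
          exact mul_lt_mul_of_pos_left hy1 h2e0
        rw [hy_def] at h6
        rw [mul_one] at h6
        calc 2 * Real.exp 1 < 2 * Real.exp 1 *
              (1 / (2 * Real.exp 1) * Real.sqrt ((n : ℝ) * α / ((k : ℝ) * (B : ℝ)))) := h6
          _ = Real.sqrt ((n : ℝ) * α / ((k : ℝ) * (B : ℝ))) := by
              rw [← mul_assoc, mul_one_div, div_self (ne_of_gt h2e0), one_mul]
      have hs : (2 * Real.exp 1) ^ 2 < (n:ℝ) * α / ((k:ℝ) * B) :=
        (Real.lt_sqrt (le_of_lt h2e0)).1 h2e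
      have hkBnα : (k:ℝ) * B ≤ (n:ℝ) * α := by
        rw [lt_div_iff₀ hkB] at hs
        have h20 : (1:ℝ) ≤ (2 * Real.exp 1) ^ 2 := by nlinarith
        have h21 := mul_le_mul_of_nonneg_right h20 (le_of_lt hkB)
        linarith
      have hn2ku : (n:ℝ) ≤ 2 * k * u := by
        have hdm := Nat.div_add_mod n k
        have hmod : n % k < k := Nat.mod_lt _ hk0
        have h7 : (k:ℝ) * (u:ℝ) + ((n % k : ℕ) : ℝ) = (n:ℝ) := by
          exact_mod_cast hdm
        have h8 : ((n % k : ℕ) : ℝ) < (k:ℝ) := by exact_mod_cast hmod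
        have h9 : (1:ℝ) ≤ (u:ℝ) := by exact_mod_cast hu0
        have h10 := mul_le_mul_of_nonneg_left h9 (le_of_lt hk0')
        nlinarith
      have ha0' : (0:ℝ) < (a:ℝ) := by exact_mod_cast ha1
      have hαa : α ≤ (a:ℝ) := Nat.le_ceil α
      have hchain : Real.exp 1 * B / a * y ≤ (u:ℝ) := by
        have hstep1 : Real.exp 1 * B / a * y ≤ Real.exp 1 * B / α * y := by
          apply mul_le_mul_of_nonneg_right _ hy0
          apply div_le_div_of_nonneg_left (by positivity) hα0 hαa
        have hstep2 : Real.exp 1 * B / α * y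
            = (B / (2 * α)) * Real.sqrt ((n:ℝ) * α / ((k:ℝ) * B)) := by
          rw [hy_def]
          field_simp
        have hstep3 : (B / (2 * α)) * Real.sqrt ((n:ℝ) * α / ((k:ℝ) * B))
            = Real.sqrt ((B / (2 * α))^2 * ((n:ℝ) * α / ((k:ℝ) * B))) := by
          rw [Real.sqrt_mul (by positivity), Real.sqrt_sq (by positivity)]
        have hstep4 : Real.sqrt ((B / (2 * α))^2 * ((n:ℝ) * α / ((k:ℝ) * B)))
            ≤ Real.sqrt (((n:ℝ) / (2 * k))^2) := by
          apply Real.sqrt_le_sqrt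
          rw [div_pow, div_pow, div_mul_div_comm, div_le_div_iff₀ (by positivity) (by positivity)]
          nlinarith [sq_nonneg ((n:ℝ)*α - (k:ℝ)*B), hα0, hk0', hn0', hB0',
            mul_le_mul_of_nonneg_left hkBnα (le_of_lt (mul_pos hn0' hα0))]
        have hstep5 : Real.sqrt (((n:ℝ) / (2 * k))^2) = (n:ℝ) / (2 * k) :=
          Real.sqrt_sq (by positivity)
        have hstep6 : (n:ℝ) / (2 * k) ≤ (u:ℝ) := by
          rw [div_le_iff₀ (by positivity)]
          linarith
        calc Real.exp 1 * B / a * y ≤ Real.exp 1 * B / α * y := hstep1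
          _ = (B / (2 * α)) * Real.sqrt ((n:ℝ) * α / ((k:ℝ) * B)) := hstep2
          _ = Real.sqrt ((B / (2 * α))^2 * ((n:ℝ) * α / ((k:ℝ) * B))) := hstep3
          _ ≤ Real.sqrt (((n:ℝ) / (2 * k))^2) := hstep4
          _ = (n:ℝ) / (2 * k) := hstep5
          _ ≤ (u:ℝ) := hstep6
      have hya : y ^ a * (B.choose a : ℝ) ≤ (u:ℝ) ^ a := by
        have h10 : (B.choose a : ℝ) ≤ (B:ℝ)^a * Real.exp 1 ^ a / (a:ℝ)^a := by
          rw [le_div_iff₀ (by positivity)]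
          exact choose_mul_pow_le B a
        have h11 : y ^ a * (B.choose a : ℝ)
            ≤ y ^ a * ((B:ℝ)^a * Real.exp 1 ^ a / (a:ℝ)^a) :=
          mul_le_mul_of_nonneg_left h10 (pow_nonneg hy0 a)
        have h12 : y ^ a * ((B:ℝ)^a * Real.exp 1 ^ a / (a:ℝ)^a)
            = (Real.exp 1 * B / a * y) ^ a := by
          clear_value y
          rw [mul_pow, div_pow, mul_pow]
          ring
        rw [h12] at h11
        exact le_trans h11 (pow_le_pow_left₀ (by positivity) hchain a)
      have hBc : (0:ℝ) < (B.choose a : ℝ) := by exact_mod_cast Nat.choose_pos haB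
      have hcount' : ((u:ℝ)) ^ a ≤ (𝓑.card : ℝ) * (B.choose a : ℝ) := by
        exact_mod_cast hcount
      exact le_of_mul_le_mul_right (le_trans hya hcount') hBc

/-- Theorem 1, lower bound for `(c,k)`-NN in `ℓ∞`:
any indexing scheme with query time `t ≤ k/α` I/Os for `c`-approximate
`k`-nearest-neighbor queries on a suitable `n`-point set in dimension
`d = O(k log(n/k))` must use `((1/(2e))·√(nα/(kB)))^α` blocks. -/
theorem linfty_knn_indexing_lower_bound :
    ∃ C : ℝ, 0 < C ∧
      ∀ n k B : ℕ, 0 < n → 0 < k → 0 < B → Even k → 2 ≤ k → 2 * k ≤ n →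
      ∀ α : ℝ, 1 ≤ α → α ≤ (B : ℝ) →
      ∀ c : ℝ, 0 ≤ c → c < 3 →
      ∃ d : ℕ, 0 < d ∧ (d : ℝ) ≤ C * k * Real.log (2 * (n : ℝ) / k) ∧
      ∃ P : Finset (Fin d → ℝ), P.card = n ∧
        ∀ t : ℕ, 0 < t → (t : ℝ) ≤ (k : ℝ) / α →
        ∀ 𝓑 : Finset (Finset (Fin d → ℝ)),
          (∀ b ∈ 𝓑, b ⊆ P ∧ b.card ≤ B) → t ≤ 𝓑.card →
          (∀ q : Fin d → ℝ, ∀ r : ℝ, IsKNNRadius P k q r →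
            ∃ 𝓒 ⊆ 𝓑, 𝓒.card ≤ t ∧
              ∃ S ⊆ 𝓒.sup id, S.card = k ∧ ∀ x ∈ S, dist q x ≤ c * r) →
          (𝓑.card : ℝ) ≥
            ((1 / (2 * Real.exp 1)) *
              Real.sqrt ((n : ℝ) * α / ((k : ℝ) * (B : ℝ)))) ^ α := by
  refine ⟨4, by norm_num, ?_⟩
  intro n k B hn hk hB hke hk2 hkn α hα1 hαB c hc0 hc3
  exact main_construction n k B hk2 hB hkn α hα1 hαB c hc3
end

section
/- Let n, d, k, δ be positive integers with k ≥ 2, and let Γ be a function from {1,…,n} to subsets of {1,…,d} with |Γ(i)| = δ for every i. Assume the expansion property: for every S ⊆ {1,…,n} with |S| ≤ 2k one has 4·|Γ(S)| ≥ 3·δ·|S|, where Γ(S) := ⋃_{i∈S} Γ(i). For i ∈ {1,…,n} let p_i ∈ {0,1}ᵈ be the characteristic vector of Γ(i), and for I ⊆ {1,…,n} with |I| = k let q_I ∈ {0,1}ᵈ be the characteristic vector of Γ(I). Then: (a) for every j ∈ {1,…,n}, hammingDist(p_j, q_I) = |Γ(I)| − δ + 2·|Γ(j)∖Γ(I)|;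 in particular hammingDist(p_i, q_I) = |Γ(I)| − δ for every i ∈ I; and (b) the set I' := {j ∈ {1,…,n} : hammingDist(p_j, q_I) ≤ (1 + 1/(4(k−1)))·(|Γ(I)| − δ)} satisfies I ⊆ I' and 2·|I'| ≤ 3·k. -/
/-- expander-based point set in Hamming space gives a relaxed
`k`-set workload in dimension `d`. -/
theorem hamming_expander_relaxed_workload
    (n d k δ : ℕ) (hn : 0 < n) (hd : 0 < d) (hk : 2 ≤ k) (hδ : 0 < δ)
    (Γ : Fin n → Finset (Fin d)) (hdeg : ∀ i, (Γ i).card = δ)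
    (hexp : ∀ S : Finset (Fin n), S.card ≤ 2 * k →
      3 * δ * S.card ≤ 4 * (S.biUnion Γ).card)
    (p : Fin n → (Fin d → Bool))
    (hp : ∀ i j, p i j = if j ∈ Γ i then true else false)
    (q : Finset (Fin n) → (Fin d → Bool))
    (hq : ∀ I j, q I j = if j ∈ I.biUnion Γ then true else false) :
    ∀ I : Finset (Fin n), I.card = k →
      (∀ j : Fin n, hammingDist (p j) (q I) =
        (I.biUnion Γ).card - δ + 2 * ((Γ j) \ (I.biUnion Γ)).card) ∧
      (∀ i ∈ I, hammingDist (p i) (q I) = (I.biUnion Γ).card - δ) ∧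
      (∀ I' : Finset (Fin n),
        (∀ j, j ∈ I' ↔ (hammingDist (p j) (q I) : ℝ) ≤
          (1 + 1 / (4 * ((k : ℝ) - 1))) * (((I.biUnion Γ).card : ℝ) - (δ : ℝ))) →
        I ⊆ I' ∧ 2 * I'.card ≤ 3 * k) := by
  intro I hI
  have hIne : I.Nonempty := Finset.card_pos.mp (by omega)
  obtain ⟨i0, hi0⟩ := hIne
  have hδB : δ ≤ (I.biUnion Γ).card := by
    rw [← hdeg i0]
    exact Finset.card_le_card (fun x hx => Finset.mem_biUnion.mpr ⟨i0, hi0, hx⟩)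
  have ha : ∀ j : Fin n, hammingDist (p j) (q I) =
      (I.biUnion Γ).card - δ + 2 * ((Γ j) \ (I.biUnion Γ)).card := by
    intro j
    have hset : (Finset.univ.filter fun x => p j x ≠ q I x)
        = (Γ j \ I.biUnion Γ) ∪ (I.biUnion Γ \ Γ j) := by
      ext x
      simp only [Finset.mem_filter, Finset.mem_union, Finset.mem_sdiff, Finset.mem_univ,
        true_and, hp, hq]
      by_cases h1 : x ∈ Γ j <;> by_cases h2 : x ∈ I.biUnion Γ <;> simp [h1, h2]
    have hd1 : hammingDist (p j) (q I)
        = (Γ j \ I.biUnion Γ).card + (I.biUnion Γ \ Γ j).card := by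
      show (Finset.univ.filter fun x => p j x ≠ q I x).card = _
      rw [hset, Finset.card_union_of_disjoint disjoint_sdiff_sdiff]
    have h2 : (Γ j \ I.biUnion Γ).card + (Γ j ∩ I.biUnion Γ).card = δ := by
      rw [Finset.card_sdiff_add_card_inter, hdeg]
    have h3 : (I.biUnion Γ \ Γ j).card + (I.biUnion Γ ∩ Γ j).card = (I.biUnion Γ).card :=
      Finset.card_sdiff_add_card_inter _ _
    rw [Finset.inter_comm] at h3
    omega
  have ha2 : ∀ i ∈ I, hammingDist (p i) (q I) = (I.biUnion Γ).card - δ := by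
    intro i hi
    have hsub : Γ i \ I.biUnion Γ = ∅ :=
      Finset.sdiff_eq_empty_iff_subset.mpr (fun x hx => Finset.mem_biUnion.mpr ⟨i, hi, hx⟩)
    rw [ha i, hsub]
    simp
  refine ⟨ha, ha2, ?_⟩
  intro I' hI'
  have hkR : (2:ℝ) ≤ (k:ℝ) := by exact_mod_cast hk
  have h4k : (0:ℝ) < 4 * ((k:ℝ) - 1) := by linarith
  have hε : (0:ℝ) ≤ 1 / (4 * ((k:ℝ) - 1)) := le_of_lt (div_pos one_pos h4k)
  have hDpos : (0:ℝ) ≤ ((I.biUnion Γ).card : ℝ) - δ := by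
    have := hδB; push_cast; linarith [show (δ:ℝ) ≤ (I.biUnion Γ).card from by exact_mod_cast hδB]
  have hIsub : I ⊆ I' := by
    intro i hi
    rw [hI' i]
    have : (hammingDist (p i) (q I) : ℝ) = ((I.biUnion Γ).card : ℝ) - δ := by
      rw [ha2 i hi, Nat.cast_sub hδB]
    rw [this]
    nlinarith
  refine ⟨hIsub, ?_⟩
  -- key pointwise bound
  have hBk : (I.biUnion Γ).card ≤ k * δ := by
    refine le_trans (Finset.card_biUnion_le) ?_
    rw [Finset.sum_congr rfl (fun i _ => hdeg i), Finset.sum_const, hI, smul_eq_mul]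
  have key : ∀ j ∈ I', 8 * ((Γ j \ I.biUnion Γ).card) ≤ δ := by
    intro j hj
    have hjd := (hI' j).mp hj
    have hcast : (hammingDist (p j) (q I) : ℝ)
        = ((I.biUnion Γ).card : ℝ) - δ + 2 * ((Γ j \ I.biUnion Γ).card : ℝ) := by
      rw [ha j, Nat.cast_add, Nat.cast_sub hδB, Nat.cast_mul]
      norm_num
    rw [hcast] at hjd
    have hne : 4 * ((k:ℝ) - 1) ≠ 0 := ne_of_gt h4k
    have hreal : 8 * ((k:ℝ) - 1) * ((Γ j \ I.biUnion Γ).card : ℝ)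
        ≤ ((I.biUnion Γ).card : ℝ) - δ := by
      have h := mul_le_mul_of_nonneg_left hjd (le_of_lt h4k)
      have e : 4 * ((k:ℝ) - 1) * ((1 + 1 / (4 * ((k:ℝ) - 1))) *
          (((I.biUnion Γ).card : ℝ) - δ)) =
          4 * ((k:ℝ) - 1) * (((I.biUnion Γ).card : ℝ) - δ)
            + (((I.biUnion Γ).card : ℝ) - δ) := by
        rw [add_mul, one_mul, mul_add, ← mul_assoc, one_div, mul_inv_cancel₀ hne, one_mul]
      rw [e] at h
      nlinarith [h]
    have hnat : 8 * (k - 1) * ((Γ j \ I.biUnion Γ).card) ≤ (I.biUnion Γ).card - δ := by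
      have hc : ((8 * (k - 1) * ((Γ j \ I.biUnion Γ).card) : ℕ) : ℝ)
          ≤ (((I.biUnion Γ).card - δ : ℕ) : ℝ) := by
        rw [Nat.cast_sub hδB, Nat.cast_mul, Nat.cast_mul,
          Nat.cast_sub (show 1 ≤ k by omega)]
        push_cast
        linarith [hreal]
      exact_mod_cast hc
    have hk1 : 0 < k - 1 := by omega
    have : (k - 1) * (8 * (Γ j \ I.biUnion Γ).card) ≤ (k - 1) * δ := by
      calc (k - 1) * (8 * (Γ j \ I.biUnion Γ).card)
          = 8 * (k - 1) * (Γ j \ I.biUnion Γ).card := by ring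
        _ ≤ (I.biUnion Γ).card - δ := hnat
        _ ≤ (k - 1) * δ := by
            have : (k-1) * δ + δ = k * δ := by
              cases k with
              | zero => omega
              | succ k' => simp [Nat.succ_sub_one, Nat.succ_mul]
            omega
    exact Nat.le_of_mul_le_mul_left this hk1
  -- counting argument
  obtain ⟨J, hJsub, hJcard⟩ :=
    Finset.exists_subset_card_eq (s := I' \ I) (n := min (I' \ I).card k) (min_le_left _ _)
  set m := min (I' \ I).card k with hm
  have hJI : Disjoint I J := Finset.disjoint_left.mpr
    (fun x hx hxJ => (Finset.mem_sdiff.mp (hJsub hxJ)).2 hx)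
  have hScard : (I ∪ J).card = k + m := by
    rw [Finset.card_union_of_disjoint hJI, hI, hJcard]
  have hSle : (I ∪ J).card ≤ 2 * k := by
    have : m ≤ k := min_le_right _ _
    omega
  have hexpS := hexp (I ∪ J) hSle
  rw [hScard] at hexpS
  have hsub : (I ∪ J).biUnion Γ ⊆ I.biUnion Γ ∪ J.biUnion (fun j => Γ j \ I.biUnion Γ) := by
    intro x hx
    obtain ⟨i, hi, hxi⟩ := Finset.mem_biUnion.mp hx
    rcases Finset.mem_union.mp hi with h | h
    · exact Finset.mem_union_left _ (Finset.mem_biUnion.mpr ⟨i, h, hxi⟩)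
    · by_cases hxB : x ∈ I.biUnion Γ
      · exact Finset.mem_union_left _ hxB
      · exact Finset.mem_union_right _
          (Finset.mem_biUnion.mpr ⟨i, h, Finset.mem_sdiff.mpr ⟨hxi, hxB⟩⟩)
  have hcard1 : ((I ∪ J).biUnion Γ).card
      ≤ (I.biUnion Γ).card + ∑ j ∈ J, (Γ j \ I.biUnion Γ).card :=
    le_trans (Finset.card_le_card hsub)
      (le_trans (Finset.card_union_le _ _)
        (by gcongr; exact Finset.card_biUnion_le))
  have hsum : 8 * ∑ j ∈ J, (Γ j \ I.biUnion Γ).card ≤ m * δ := by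
    rw [Finset.mul_sum]
    calc ∑ j ∈ J, 8 * (Γ j \ I.biUnion Γ).card
        ≤ ∑ _j ∈ J, δ := Finset.sum_le_sum
            (fun j hj => key j (Finset.mem_sdiff.mp (hJsub hj)).1)
      _ = m * δ := by rw [Finset.sum_const, hJcard, smul_eq_mul]
  have h8 : 8 * ((I ∪ J).biUnion Γ).card ≤ 8 * k * δ + m * δ := by
    calc 8 * ((I ∪ J).biUnion Γ).card
        ≤ 8 * ((I.biUnion Γ).card + ∑ j ∈ J, (Γ j \ I.biUnion Γ).card) := by omega
      _ = 8 * (I.biUnion Γ).card + 8 * ∑ j ∈ J, (Γ j \ I.biUnion Γ).card := by ring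
      _ ≤ 8 * (k * δ) + m * δ := by omega
      _ = 8 * k * δ + m * δ := by ring
  have h6 : δ * (6 * (k + m)) ≤ δ * (8 * k + m) := by nlinarith
  have h7 : 6 * (k + m) ≤ 8 * k + m := Nat.le_of_mul_le_mul_left h6 hδ
  have hI'le : I'.card ≤ k + (I' \ I).card := by
    have : I' ⊆ I ∪ (I' \ I) := by
      intro x hx
      by_cases h : x ∈ I
      · exact Finset.mem_union_left _ h
      · exact Finset.mem_union_right _ (Finset.mem_sdiff.mpr ⟨hx, h⟩)
    calc I'.card ≤ (I ∪ (I' \ I)).card := Finset.card_le_card this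
      _ ≤ I.card + (I' \ I).card := Finset.card_union_le _ _
      _ = k + (I' \ I).card := by rw [hI]
  omega
end

section
/- There exists a constant C > 0 such that the following holds. Let n, k, B be positive integers with k even, 2 ≤ k ≤ n/2, let α be a real number with 1 ≤ α ≤ B, and let c be a real number with 1 ≤ c < 1 + 1/(4k). Then there exist a positive integer d ≤ C·k·log(2n/k) and a set P of n points in {0,1}ᵈ (with the Hamming distance) with the following property: for every positive integer t with t ≤ k/α, and every finite family 𝓑 of subsets of P, each of cardinality at most B, with t ≤ |𝓑|, such that for every q ∈ {0,1}ᵈ there exist a subfamily 𝓒 ⊆ 𝓑 with |𝓒| ≤ t and a set S ⊆ ⋃𝓒 with |S| = k and hammingDist(q,x) ≤ c·r for all x ∈ S, where r is the k-nearest-neighbor radius of q in P, one has |𝓑| ≥ ((1/(2e))·√(n·α/(k·B)))^α. -/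
open Finset



/-- `a^a ≤ a! * e^a`. -/
lemma pow_self_le_factorial_mul_exp : ∀ a : ℕ, (a : ℝ) ^ a ≤ (Nat.factorial a : ℝ) * Real.exp 1 ^ a := by
  intro a
  induction a with
  | zero => simp
  | succ b ih =>
    rcases Nat.eq_zero_or_pos b with hb | hb
    · subst hb
      have := Real.add_one_le_exp (1:ℝ)
      norm_num
    · have hbR : (0:ℝ) < b := by exact_mod_cast hb
      have key : ((b:ℝ)+1) ^ b ≤ (b:ℝ)^b * Real.exp 1 := by
        have h1 : ((b:ℝ)+1) = (b:ℝ) * (1 + 1/b) := by field_simp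
        have h2 : (1 + 1/(b:ℝ)) ^ b ≤ Real.exp 1 := by
          have := Real.add_one_le_exp (1/(b:ℝ))
          calc (1 + 1/(b:ℝ)) ^ b ≤ (Real.exp (1/(b:ℝ))) ^ b := by
                apply pow_le_pow_left₀ (by positivity) (by linarith)
            _ = Real.exp ((1/(b:ℝ)) * b) := by rw [← Real.exp_nat_mul]; ring_nf
            _ = Real.exp 1 := by rw [one_div, inv_mul_cancel₀ (ne_of_gt hbR)]
        calc ((b:ℝ)+1) ^ b = (b:ℝ)^b * (1+1/(b:ℝ))^b := by rw [h1, mul_pow]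
          _ ≤ (b:ℝ)^b * Real.exp 1 := by
              apply mul_le_mul_of_nonneg_left h2 (by positivity)
      have : ((b:ℝ)+1) ^ (b+1) = ((b:ℝ)+1) * ((b:ℝ)+1)^b := by ring
      push_cast
      rw [this]
      calc ((b:ℝ)+1) * ((b:ℝ)+1)^b ≤ ((b:ℝ)+1) * ((b:ℝ)^b * Real.exp 1) := by
            apply mul_le_mul_of_nonneg_left key (by positivity)
        _ ≤ ((b:ℝ)+1) * ((Nat.factorial b : ℝ) * Real.exp 1 ^ b * Real.exp 1) := by
            apply mul_le_mul_of_nonneg_left _ (by positivity)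
            apply mul_le_mul_of_nonneg_right ih (Real.exp_pos 1).le
        _ = ((b:ℝ)+1) * (Nat.factorial b : ℝ) * Real.exp 1 ^ (b+1) := by ring
        _ = ((Nat.factorial (b+1) : ℝ)) * Real.exp 1 ^ (b+1) := by
            rw [Nat.factorial_succ]; push_cast; ring

/-- `C(B,a) ≤ (eB/a)^a` for `a ≥ 1`. -/
lemma choose_le_exp_pow (B a : ℕ) (ha : 1 ≤ a) :
    (B.choose a : ℝ) ≤ (Real.exp 1 * B / a) ^ a := by
  have haR : (0:ℝ) < a := by exact_mod_cast ha
  have h1 : (B.choose a : ℝ) * (Nat.factorial a : ℝ) ≤ (B:ℝ)^a := by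
    have h := Nat.descFactorial_le_pow B a
    have h2 := Nat.descFactorial_eq_factorial_mul_choose B a
    have : B.choose a * Nat.factorial a ≤ B ^ a := by
      rw [Nat.mul_comm, ← h2]; exact h
    exact_mod_cast this
  have hfac : ((a:ℝ)/Real.exp 1)^a ≤ (Nat.factorial a : ℝ) := by
    have hp := pow_self_le_factorial_mul_exp a
    rw [div_pow, div_le_iff₀ (by positivity)]
    linarith
  have hfacpos : (0:ℝ) < (Nat.factorial a : ℝ) := by exact_mod_cast a.factorial_pos
  have hBnn : (0:ℝ) ≤ (B:ℝ) := Nat.cast_nonneg B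
  rw [div_pow, ge_iff_le.symm, ge_iff_le, le_div_iff₀ (by positivity)]
  calc (B.choose a : ℝ) * (a:ℝ)^a = (B.choose a : ℝ) * ((a:ℝ)/Real.exp 1)^a * Real.exp 1 ^ a := by
        rw [div_pow]; field_simp
    _ ≤ (B.choose a : ℝ) * (Nat.factorial a : ℝ) * Real.exp 1 ^ a := by
        apply mul_le_mul_of_nonneg_right _ (by positivity)
        exact mul_le_mul_of_nonneg_left hfac (Nat.cast_nonneg _)
    _ ≤ (B:ℝ)^a * Real.exp 1 ^ a := by
        apply mul_le_mul_of_nonneg_right h1 (by positivity)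
    _ = (Real.exp 1 * (B:ℝ))^a := by rw [mul_pow]; ring


/-- choose is monotone in k up to the middle -/
lemma choose_mono_middle (n : ℕ) {i j : ℕ} (hij : i ≤ j) (hj : 2 * j ≤ n) :
    n.choose i ≤ n.choose j := by
  induction j with
  | zero => simp_all
  | succ b ih =>
    rcases Nat.lt_or_ge i (b+1) with h | h
    · have h1 : n.choose i ≤ n.choose b := ih (Nat.lt_succ_iff.mp h) (by omega)
      refine h1.trans ?_
      -- choose n b ≤ choose n (b+1) since b+1 ≤ n - b
      have key : n.choose b * (n - b) = n.choose (b+1) * (b+1) := (Nat.choose_succ_right_eq n b).symm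
      have h2 : b + 1 ≤ n - b := by omega
      by_contra hc
      push_neg at hc
      have : n.choose (b+1) * (b+1) < n.choose b * (n - b) := by
        calc n.choose (b+1) * (b+1) ≤ n.choose (b+1) * (n - b) := Nat.mul_le_mul_left _ h2
          _ < n.choose b * (n-b) := by
            apply Nat.mul_lt_mul_of_lt_of_le hc (le_refl _)
            omega
      omega
    · have : i = b + 1 := by omega
      subst this; rfl

/-- The Hamming ball of radius `< p` around `c` in `Fin u → Bool` has at most `p * C(u,p)`
elements, provided `2*p ≤ u`. -/
lemma ball_card_le (u p : ℕ) (hp : 0 < p) (hpu : 2 * p ≤ u) (c : Fin u → Bool) :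
    ((Finset.univ : Finset (Fin u → Bool)).filter (fun x => hammingDist c x < p)).card
      ≤ p * u.choose p := by
  classical
  -- injection into subsets of Fin u of card < p
  have hinj : ∀ x ∈ (Finset.univ : Finset (Fin u → Bool)).filter (fun x => hammingDist c x < p),
      ({i | c i ≠ x i} : Finset (Fin u)) ∈ (Finset.univ : Finset (Finset (Fin u))).filter (fun A => A.card < p) := by
    intro x hx
    simp only [mem_filter, mem_univ, true_and] at hx ⊢
    exact hx
  have hcard : ((Finset.univ : Finset (Fin u → Bool)).filter (fun x => hammingDist c x < p)).card
      ≤ ((Finset.univ : Finset (Finset (Fin u))).filter (fun A => A.card < p)).card := by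
    apply Finset.card_le_card_of_injOn _ hinj
    intro x hx y hy hxy
    funext i
    simp only at hxy
    have : (i ∈ ({j | c j ≠ x j} : Finset (Fin u))) ↔ (i ∈ ({j | c j ≠ y j} : Finset (Fin u))) := by rw [hxy]
    simp only [Finset.mem_filter, Finset.mem_univ, true_and] at this
    by_cases h : c i = x i <;> by_cases h' : c i = y i <;> simp_all
    · cases hx' : x i <;> cases hy' : y i <;> simp_all
  refine hcard.trans ?_
  have : ((Finset.univ : Finset (Finset (Fin u))).filter (fun A => A.card < p))
      = (Finset.range p).biUnion (fun i => Finset.powersetCard i Finset.univ) := by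
    ext A
    simp [Finset.mem_powersetCard, Finset.subset_univ]
  rw [this, ]
  refine (Finset.card_biUnion_le).trans ?_
  calc ∑ i ∈ Finset.range p, (Finset.powersetCard i (Finset.univ : Finset (Fin u))).card
      = ∑ i ∈ Finset.range p, u.choose i := by
        refine Finset.sum_congr rfl fun i _ => ?_
        rw [Finset.card_powersetCard, Finset.card_univ, Fintype.card_fin]
    _ ≤ ∑ i ∈ Finset.range p, u.choose p := by
        refine Finset.sum_le_sum fun i hi => ?_
        exact choose_mono_middle u (by simp at hi; omega) hpu
    _ = p * u.choose p := by rw [Finset.sum_const, Finset.card_range, smul_eq_mul]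


lemma greedy_code (u p : ℕ) (hp : 0 < p) (F : Finset (Fin u → Bool)) :
    ∃ 𝒞 ⊆ F, (∀ x ∈ 𝒞, ∀ y ∈ 𝒞, x ≠ y → p ≤ hammingDist x y) ∧
      ∀ x ∈ F, ∃ c ∈ 𝒞, hammingDist c x < p := by
  classical
  induction F using Finset.strongInduction with
  | _ F ih =>
    rcases F.eq_empty_or_nonempty with rfl | ⟨v, hv⟩
    · exact ⟨∅, by simp⟩
    · set F' := F.filter (fun x => ¬ hammingDist v x < p) with hF'
      have hss : F' ⊂ F := by
        refine Finset.filter_ssubset.mpr ⟨v, hv, ?_⟩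
        simp only [not_not, hammingDist_self]
        omega
      obtain ⟨𝒞', h𝒞'F, hsep, hcov⟩ := ih F' hss
      refine ⟨insert v 𝒞', ?_, ?_, ?_⟩
      · intro x hx
        rcases Finset.mem_insert.mp hx with rfl | hx2
        · exact hv
        · exact (Finset.filter_subset _ _) (h𝒞'F hx2)
      · intro x hx y hy hxy
        rcases Finset.mem_insert.mp hx with rfl | hx2
        · rcases Finset.mem_insert.mp hy with rfl | hy2
          · exact absurd rfl hxy
          · have hy' := h𝒞'F hy2
            rw [hF', Finset.mem_filter] at hy'
            omega
        · rcases Finset.mem_insert.mp hy with rfl | hy2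
          · have hx' := h𝒞'F hx2
            rw [hF', Finset.mem_filter] at hx'
            rw [hammingDist_comm]
            omega
          · exact hsep x hx2 y hy2 hxy
      · intro x hxF
        by_cases h : hammingDist v x < p
        · exact ⟨v, Finset.mem_insert_self _ _, h⟩
        · obtain ⟨c, hc, hcd⟩ := hcov x (by rw [hF', Finset.mem_filter]; exact ⟨hxF, h⟩)
          exact ⟨c, Finset.mem_insert_of_mem hc, hcd⟩

/-- Existence of a binary code of size M, length u, min distance p. -/
lemma exists_code (u p M : ℕ) (hp : 0 < p) (hpu : 2 * p ≤ u)
    (hM : M * (p * u.choose p) ≤ 2 ^ u) :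
    ∃ 𝒞 : Finset (Fin u → Bool), M ≤ 𝒞.card ∧
      ∀ x ∈ 𝒞, ∀ y ∈ 𝒞, x ≠ y → p ≤ hammingDist x y := by
  classical
  obtain ⟨𝒞, -, hsep, hcov⟩ := greedy_code u p hp Finset.univ
  refine ⟨𝒞, ?_, hsep⟩
  have hV := fun c : Fin u → Bool => ball_card_le u p hp hpu c
  have hcover : (Finset.univ : Finset (Fin u → Bool)) ⊆
      𝒞.biUnion (fun c => (Finset.univ : Finset (Fin u → Bool)).filter (fun x => hammingDist c x < p)) := by
    intro x _
    obtain ⟨c, hc, hcd⟩ := hcov x (Finset.mem_univ x)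
    exact Finset.mem_biUnion.mpr ⟨c, hc, by simp [hcd]⟩
  have h1 : 2 ^ u ≤ 𝒞.card * (p * u.choose p) := by
    calc 2 ^ u = (Finset.univ : Finset (Fin u → Bool)).card := by
          rw [Finset.card_univ]; simp [Fintype.card_fun]
      _ ≤ (𝒞.biUnion (fun c => (Finset.univ : Finset (Fin u → Bool)).filter (fun x => hammingDist c x < p))).card :=
          Finset.card_le_card hcover
      _ ≤ ∑ c ∈ 𝒞, ((Finset.univ : Finset (Fin u → Bool)).filter (fun x => hammingDist c x < p)).card :=
          Finset.card_biUnion_le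
      _ ≤ ∑ c ∈ 𝒞, (p * u.choose p) := Finset.sum_le_sum (fun c _ => hV c)
      _ = 𝒞.card * (p * u.choose p) := by rw [Finset.sum_const, smul_eq_mul]
  have hpos : 0 < p * u.choose p := by
    have : 0 < u.choose p := Nat.choose_pos (by omega)
    positivity
  have := hM.trans h1
  exact Nat.le_of_mul_le_mul_right this hpos


section
variable {ι : Type*} [Fintype ι]

lemma hd_comp_equiv {ι' : Type*} [Fintype ι'] (e : ι ≃ ι')
    (x y : ι' → Bool) : hammingDist (x ∘ e) (y ∘ e) = hammingDist x y := by
  show (Finset.univ.filter fun i => (x ∘ e) i ≠ (y ∘ e) i).card = (Finset.univ.filter fun i => x i ≠ y i).card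
  apply Finset.card_bij (fun i _ => e i)
  · intro a ha; simpa using by simpa using ha
  · intro a _ b _ h; exact e.injective h
  · intro b hb; exact ⟨e.symm b, by simpa using by simpa using hb, by simp⟩

end

section
variable {u : ℕ}

/-- doubled codeword -/
def dcw (c0 : Fin u → Bool) : (Fin u ⊕ Fin u) → Bool := Sum.elim c0 (fun t => !(c0 t))

lemma hd_sumElim {A B : Type*} [Fintype A] [Fintype B] [DecidableEq A] [DecidableEq B]
    (f₁ g₁ : A → Bool) (f₂ g₂ : B → Bool) :
    hammingDist (Sum.elim f₁ f₂) (Sum.elim g₁ g₂) = hammingDist f₁ g₁ + hammingDist f₂ g₂ := by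
  show (Finset.univ.filter fun i => Sum.elim f₁ f₂ i ≠ Sum.elim g₁ g₂ i).card = _
  rw [← Finset.card_toLeft_add_card_toRight]
  congr 1
  · apply Finset.card_bij (fun x _ => x) <;> intro a ha <;> simp_all
  · apply Finset.card_bij (fun x _ => x) <;> intro a ha <;> simp_all

lemma hd_not (f g : Fin u → Bool) :
    hammingDist (fun t => !(f t)) (fun t => !(g t)) = hammingDist f g := by
  show (Finset.univ.filter _).card = (Finset.univ.filter _).card
  congr 1
  apply Finset.filter_congr
  intro i _
  simp

lemma hd_dcw (c0 c1 : Fin u → Bool) :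
    hammingDist (dcw c0) (dcw c1) = 2 * hammingDist c0 c1 := by
  unfold dcw
  rw [hd_sumElim, hd_not]
  ring

lemma hd_dcw_zero (c0 : Fin u → Bool) :
    hammingDist (dcw c0) (fun _ => false) = u := by
  have h : (fun _ : Fin u ⊕ Fin u => false) = Sum.elim (fun _ => false) (fun _ => (false : Bool)) := by
    funext z; cases z <;> rfl
  rw [h]
  unfold dcw
  rw [hd_sumElim]
  have h1 : hammingDist c0 (fun _ => (false : Bool)) = (Finset.univ.filter fun i => c0 i = true).card := by
    show (Finset.univ.filter _).card = _
    congr 1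
    apply Finset.filter_congr
    intro i _
    simp
  have h2 : hammingDist (fun t => !(c0 t)) (fun _ => (false : Bool)) = (Finset.univ.filter fun i => ¬ (c0 i = true)).card := by
    show (Finset.univ.filter _).card = _
    congr 1
    apply Finset.filter_congr
    intro i _
    simp
  rw [h1, h2, Finset.card_filter_add_card_filter_not]
  simp
end

section
variable {k u : ℕ}

/-- a point of cluster-position `i` with codeword `c0` -/
def HPt (k : ℕ) (i : Fin k) (c0 : Fin u → Bool) : (Fin k × (Fin u ⊕ Fin u)) → Bool :=
  fun z => if z.1 = i then dcw c0 z.2 else false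

/-- a query assembled from codewords `g i` -/
def HQ (k : ℕ) (g : Fin k → (Fin u → Bool)) : (Fin k × (Fin u ⊕ Fin u)) → Bool :=
  fun z => dcw (g z.1) z.2

lemma hd_prod {κ σ : Type*} [Fintype κ] [Fintype σ] [DecidableEq κ] [DecidableEq σ]
    (F G : κ × σ → Bool) :
    hammingDist F G = ∑ i : κ, hammingDist (fun z => F (i, z)) (fun z => G (i, z)) := by
  show (Finset.univ.filter fun i => F i ≠ G i).card = _
  rw [Finset.card_eq_sum_card_fiberwise (f := Prod.fst) (t := Finset.univ) (fun x _ => mem_univ _)]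
  refine Finset.sum_congr rfl fun i _ => ?_
  apply Finset.card_bij (fun x _ => x.2)
  · intro a ha; simp only [mem_filter, mem_univ, true_and] at ha ⊢
    obtain ⟨h1, h2⟩ := ha; subst h2; exact h1
  · intro a ha b hb h
    simp only [mem_filter] at ha hb
    exact Prod.ext (ha.2.trans hb.2.symm) h
  · intro z hz; exact ⟨(i, z), by simpa using by simpa using hz, rfl⟩

lemma hd_HQ_HPt (g : Fin k → Fin u → Bool) (i : Fin k) (c0 : Fin u → Bool) :
    hammingDist (HQ k g) (HPt k i c0) = (k-1) * u + 2 * hammingDist (g i) c0 := by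
  rw [hd_prod]
  have hterm : ∀ i' : Fin k, hammingDist (fun z => HQ k g (i', z)) (fun z => HPt k i c0 (i', z))
      = if i' = i then 2 * hammingDist (g i) c0 else u := by
    intro i'
    by_cases h : i' = i
    · subst h
      rw [if_pos rfl]
      have h1 : (fun z => HPt k i' c0 (i', z)) = dcw c0 := by
        funext z; simp [HPt]
      have h2 : (fun z => HQ k g (i', z)) = dcw (g i') := rfl
      rw [h1, h2]
      exact hd_dcw _ _
    · rw [if_neg h]
      have h1 : (fun z => HPt k i c0 (i', z)) = (fun _ => (false : Bool)) := by
        funext z; simp [HPt, h]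
      have h2 : (fun z => HQ k g (i', z)) = dcw (g i') := rfl
      rw [h1, h2]
      exact hd_dcw_zero _
  calc ∑ i' : Fin k, hammingDist (fun z => HQ k g (i', z)) (fun z => HPt k i c0 (i', z))
      = ∑ i' : Fin k, (if i' = i then 2 * hammingDist (g i) c0 else u) :=
        Finset.sum_congr rfl (fun i' _ => hterm i')
    _ = (k-1) * u + 2 * hammingDist (g i) c0 := by
        rw [← Finset.sum_erase_add _ _ (mem_univ i), if_pos rfl]
        have hu : ∀ x ∈ Finset.univ.erase i, (if x = i then 2 * hammingDist (g i) c0 else u) = u := by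
          intro x hx
          rw [if_neg (Finset.ne_of_mem_erase hx)]
        rw [Finset.sum_congr rfl hu, Finset.sum_const, Finset.card_erase_of_mem (mem_univ i),
          Finset.card_univ, Fintype.card_fin, smul_eq_mul]

lemma HPt_inj (hu : 0 < u) {i i' : Fin k} {c0 c1 : Fin u → Bool}
    (h : HPt k i c0 = HPt k i' c1) : i = i' ∧ c0 = c1 := by
  have hii : i = i' := by
    by_contra hne
    have h1 := congrFun h (i, Sum.inl ⟨0, hu⟩)
    have h2 := congrFun h (i, Sum.inr ⟨0, hu⟩)
    simp [HPt, hne, dcw] at h1 h2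
    rw [h1] at h2
    simp at h2
  subst hii
  refine ⟨rfl, ?_⟩
  funext t
  have := congrFun h (i, Sum.inl t)
  simpa [HPt, dcw] using this
end


/-- `r` is the `k`-nearest-neighbor radius of `q` in the finite set `P` of
points of Hamming space `{0,1}ᵈ`. -/
def IsHammingKNNRadius {d : ℕ} (P : Finset (Fin d → Bool)) (k : ℕ)
    (q : Fin d → Bool) (r : ℕ) : Prop :=
  ∃ T ⊆ P, T.card = k ∧
    (∀ x ∈ T, ∀ y ∈ P, y ∉ T → hammingDist q x ≤ hammingDist q y) ∧
    (∀ x ∈ T, hammingDist q x ≤ r) ∧ (∃ x ∈ T, hammingDist q x = r)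

set_option maxHeartbeats 8000000 in
/-- Theorem 3, lower bound for `(c,k)`-NN in Hamming space:
any indexing scheme with query time `t ≤ k/α` I/Os for `c`-approximate
`k`-nearest-neighbor queries, `c < 1 + 1/(4k)`, on a suitable `n`-point set
in dimension `d = O(k log(n/k))` must use `((1/(2e))·√(nα/(kB)))^α` blocks. -/
theorem hamming_knn_indexing_lower_bound :
    ∃ C : ℝ, 0 < C ∧
      ∀ n k B : ℕ, 0 < n → 0 < k → 0 < B → Even k → 2 ≤ k → 2 * k ≤ n →
      ∀ α : ℝ, 1 ≤ α → α ≤ (B : ℝ) →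
      ∀ c : ℝ, 1 ≤ c → c < 1 + 1 / (4 * (k : ℝ)) →
      ∃ d : ℕ, 0 < d ∧ (d : ℝ) ≤ C * k * Real.log (2 * (n : ℝ) / k) ∧
      ∃ P : Finset (Fin d → Bool), P.card = n ∧
        ∀ t : ℕ, 0 < t → (t : ℝ) ≤ (k : ℝ) / α →
        ∀ 𝓑 : Finset (Finset (Fin d → Bool)),
          (∀ b ∈ 𝓑, b ⊆ P ∧ b.card ≤ B) → t ≤ 𝓑.card →
          (∀ q : Fin d → Bool, ∀ r : ℕ, IsHammingKNNRadius P k q r →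
            ∃ 𝓒 ⊆ 𝓑, 𝓒.card ≤ t ∧
              ∃ S ⊆ 𝓒.sup id, S.card = k ∧
                ∀ x ∈ S, (hammingDist q x : ℝ) ≤ c * (r : ℝ)) →
          (𝓑.card : ℝ) ≥
            ((1 / (2 * Real.exp 1)) *
              Real.sqrt ((n : ℝ) * α / ((k : ℝ) * (B : ℝ)))) ^ α := by
  classical
  refine ⟨100, by norm_num, ?_⟩
  intro n k B hn hk hB hkeven hk2 hkn α hα1 hαB c hc1 hc2
  have hkR : (2:ℝ) ≤ (k:ℝ) := by exact_mod_cast hk2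
  -- basic quantities
  set m := n / k with hm
  have hm2 : 2 ≤ m := (Nat.le_div_iff_mul_le hk).mpr (by omega)
  have hkm : k * m ≤ n := by
    rw [hm, Nat.mul_comm]; exact Nat.div_mul_le_self n k
  have hnkm : n < k * (m + 1) := by
    rw [hm]
    have h1 := Nat.div_add_mod n k
    have h2 := Nat.mod_lt n hk
    calc n = k * (n/k) + n % k := h1.symm
      _ < k * (n/k) + k := by omega
      _ = k * (n/k + 1) := by ring
  set s := Nat.size (m + 1) with hs
  set p := s + 1 with hp
  have hp1 : 0 < p := by omega
  set u := 8 * p with hu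
  have hu0 : 0 < u := by omega
  have hmp : m + 1 ≤ 2 ^ s := (Nat.lt_size_self (m+1)).le
  have hsm : 2 ^ (s - 1) ≤ m + 1 := by
    have : s - 1 < Nat.size (m + 1) := by
      have hs1 : 1 ≤ s := by
        have : 1 < m + 1 := by omega
        have := Nat.size_pos.mpr (show 0 < m + 1 by omega)
        omega
      omega
    exact (Nat.lt_size).mp this
  -- numeric condition for code existence
  have hnum : (m + 1) * (p * u.choose p) ≤ 2 ^ u := by
    have hc1' : (u.choose p : ℝ) ≤ 24 ^ p := by
      have h1 := choose_le_exp_pow u p (by omega)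
      have h2 : Real.exp 1 * (u:ℝ) / p = 8 * Real.exp 1 := by
        rw [hu]; push_cast
        field_simp
      rw [h2] at h1
      refine h1.trans ?_
      apply pow_le_pow_left₀ (by positivity)
      have := Real.exp_one_lt_d9
      linarith
    have hpR : (p : ℝ) ≤ 2 ^ p := by exact_mod_cast (Nat.lt_two_pow_self (n := p)).le
    have hmR : ((m:ℝ) + 1) ≤ 2 ^ p / 2 := by
      have : ((m:ℝ) + 1) ≤ 2 ^ s := by exact_mod_cast hmp
      rw [hp]
      rw [pow_succ]
      linarith
    have key : ((m:ℝ) + 1) * ((p:ℝ) * (u.choose p : ℝ)) ≤ 2 ^ u := by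
      have h96 : ((m:ℝ) + 1) * ((p:ℝ) * (u.choose p : ℝ)) ≤ (2^p/2) * (2^p * 24^p) := by
        apply mul_le_mul hmR _ (by positivity) (by positivity)
        apply mul_le_mul hpR hc1' (Nat.cast_nonneg _) (by positivity)
      refine h96.trans ?_
      have : (2:ℝ)^p/2 * (2^p * 24^p) ≤ (2^p * (2^p * 24^p)) := by
        have hposs : (0:ℝ) < 2^p * 24^p := by positivity
        nlinarith [pow_pos (show (0:ℝ) < 2 by norm_num) p]
      refine this.trans ?_
      have : (2:ℝ)^p * (2^p * 24^p) = 96 ^ p := by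
        rw [← mul_pow, ← mul_pow]; norm_num
      rw [this, hu]
      calc (96:ℝ) ^ p ≤ 256 ^ p := by
            apply pow_le_pow_left₀ (by norm_num) (by norm_num)
        _ = 2 ^ (8 * p) := by
            rw [pow_mul]; norm_num
    exact_mod_cast key
  obtain ⟨𝒞, hCcard, hCdist⟩ := exists_code u p (m+1) hp1 (by omega) hnum
  obtain ⟨CS, hCSsub, hCScard⟩ := Finset.exists_subset_card_eq hCcard
  have hEC : Fintype.card (CS : Finset (Fin u → Bool)) = m + 1 := by
    rw [Fintype.card_coe, hCScard]
  set ec : (CS : Finset (Fin u → Bool)) ≃ Fin (m+1) := Fintype.equivFinOfCardEq hEC with hec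
  set cw : Fin (m+1) → (Fin u → Bool) := fun j => ((ec.symm j : (CS : Finset (Fin u → Bool))) : Fin u → Bool) with hcw
  have hcwmem : ∀ j, cw j ∈ 𝒞 := fun j => hCSsub (ec.symm j).2
  have hcwinj : Function.Injective cw := by
    intro j j' h
    have := Subtype.ext h
    exact ec.symm.injective this
  have hcwdist : ∀ j j', j ≠ j' → p ≤ hammingDist (cw j) (cw j') := by
    intro j j' hjj
    exact hCdist _ (hcwmem j) _ (hcwmem j') (fun hh => hjj (hcwinj hh))
  -- dimension
  refine ⟨k * (u + u), by positivity, ?_, ?_⟩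
  · -- dimension bound
    have hk0 : (0:ℝ) < k := by positivity
    have hn0 : (0:ℝ) < n := by exact_mod_cast hn
    have hnk4 : (4:ℝ) ≤ 2 * (n:ℝ) / k := by
      rw [le_div_iff₀ hk0]
      have : (2 * k : ℝ) ≤ n := by exact_mod_cast hkn
      linarith
    set L := Real.log (2 * (n:ℝ) / k) with hL
    have hL4 : 2 * Real.log 2 ≤ L := by
      have h1 : Real.log 4 ≤ L := Real.log_le_log (by norm_num) hnk4
      have h2 : Real.log 4 = 2 * Real.log 2 := by
        rw [show (4:ℝ) = 2^2 by norm_num, Real.log_pow]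
        push_cast; ring
      linarith
    have hlog2 : (0.6931:ℝ) ≤ Real.log 2 := by
      have := Real.log_two_gt_d9
      linarith
    have hs1 : 1 ≤ s := by
      have := Nat.size_pos.mpr (show 0 < m + 1 by omega)
      omega
    have hsL : ((s:ℝ) - 1) * Real.log 2 ≤ L := by
      have h1 : ((2:ℝ)) ^ (s - 1 : ℕ) ≤ (m:ℝ) + 1 := by exact_mod_cast hsm
      have h2 : (m:ℝ) + 1 ≤ 2 * (n:ℝ) / k := by
        have hmnk : (m:ℝ) ≤ (n:ℝ)/k := by
          rw [le_div_iff₀ hk0]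
          have : (k * m : ℝ) ≤ n := by exact_mod_cast hkm
          linarith
        have : (1:ℝ) ≤ (n:ℝ)/k := by
          rw [le_div_iff₀ hk0]
          have : (k:ℝ) ≤ n := by
            have : (2*k:ℝ) ≤ n := by exact_mod_cast hkn
            linarith
          linarith
        calc (m:ℝ) + 1 ≤ (n:ℝ)/k + (n:ℝ)/k := by linarith
          _ = 2 * (n:ℝ)/k := by ring
      have h3 : Real.log ((2:ℝ) ^ (s - 1 : ℕ)) ≤ L :=
        (Real.log_le_log (by positivity) (h1.trans h2))
      rw [Real.log_pow] at h3
      have h4 : ((s - 1 : ℕ) : ℝ) = (s:ℝ) - 1 := by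
        push_cast [Nat.cast_sub hs1]
        ring
      rw [h4] at h3
      exact h3
    have hgoal : 16 * ((s:ℝ) + 1) ≤ 100 * L := by
      nlinarith [hsL, hlog2, hL4, mul_le_mul_of_nonneg_left hsL (by norm_num : (0:ℝ) ≤ 16)]
    have hcast : ((k * (u + u) : ℕ) : ℝ) = (k:ℝ) * (16 * ((s:ℝ) + 1)) := by
      push_cast [hu, hp]
      ring
    rw [hcast]
    calc (k:ℝ) * (16 * ((s:ℝ)+1)) ≤ (k:ℝ) * (100 * L) := by
          apply mul_le_mul_of_nonneg_left hgoal hk0.le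
      _ = 100 * k * L := by ring
  -- the equivalence and the point set
  set d := k * (u + u) with hd
  have E : Fin d ≃ (Fin k × (Fin u ⊕ Fin u)) :=
    (finProdFinEquiv.symm).trans ((Equiv.refl (Fin k)).prodCongr finSumFinEquiv.symm)
  set Tr : ((Fin k × (Fin u ⊕ Fin u)) → Bool) → (Fin d → Bool) := fun x => x ∘ E with hTrdef
  have hTr : ∀ x y, hammingDist (Tr x) (Tr y) = hammingDist x y := fun x y => hd_comp_equiv E x y
  have hTrinj : Function.Injective Tr := by
    intro x y h
    funext z
    have := congrFun h (E.symm z)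
    simpa [hTrdef] using this
  set Pt : Fin k → Fin (m+1) → (Fin d → Bool) := fun i j => Tr (HPt k i (cw j)) with hPtdef
  have hPtinj : ∀ i j i' j', Pt i j = Pt i' j' → i = i' ∧ j = j' := by
    intro i j i' j' h
    obtain ⟨h1, h2⟩ := HPt_inj hu0 (hTrinj h)
    exact ⟨h1, hcwinj h2⟩
  have hposl : ∀ l : Fin n, l.1 % k < k := fun l => Nat.mod_lt _ hk
  have hcixl : ∀ l : Fin n, l.1 / k < m + 1 := by
    intro l
    have : l.1 / k ≤ n / k := Nat.div_le_div_right l.2.le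
    omega
  set P : Finset (Fin d → Bool) :=
    Finset.univ.image (fun l : Fin n => Pt ⟨l.1 % k, hposl l⟩ ⟨l.1 / k, hcixl l⟩) with hPdef
  have hPtmemP : ∀ (i : Fin k) (j : Fin (m+1)), (j:ℕ) < m → Pt i j ∈ P := by
    intro i j hj
    have hl : (j:ℕ) * k + (i:ℕ) < n := by
      have h1 : (j:ℕ) ≤ m - 1 := by omega
      have h2 : (j:ℕ) * k ≤ (m-1) * k := Nat.mul_le_mul_right k h1
      have h3 : (m-1) * k + k = m * k := by
        have hm1 : m - 1 + 1 = m := by omega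
        calc (m-1) * k + k = ((m-1) + 1) * k := by ring
          _ = m * k := by rw [hm1]
      have h4 : m * k ≤ n := by rw [Nat.mul_comm]; exact hkm
      have h5 := i.2
      omega
    have e1 : ((j:ℕ) * k + (i:ℕ)) % k = (i:ℕ) := by
      rw [Nat.mul_comm, Nat.mul_add_mod]
      exact Nat.mod_eq_of_lt i.2
    have e2 : ((j:ℕ) * k + (i:ℕ)) / k = (j:ℕ) := by
      rw [Nat.mul_comm, Nat.mul_add_div hk, Nat.div_eq_of_lt i.2]
      omega
    rw [hPdef]
    apply Finset.mem_image.mpr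
    exact ⟨⟨(j:ℕ) * k + (i:ℕ), hl⟩, Finset.mem_univ _, congrArg₂ Pt (Fin.ext e1) (Fin.ext e2)⟩
  have hPcard : P.card = n := by
    rw [hPdef, Finset.card_image_of_injective _ ?_, Finset.card_univ, Fintype.card_fin]
    intro l1 l2 h
    obtain ⟨h1, h2⟩ := hPtinj _ _ _ _ h
    have e1 : l1.1 % k = l2.1 % k := congrArg Fin.val h1
    have e2 : l1.1 / k = l2.1 / k := congrArg Fin.val h2
    apply Fin.ext
    have d1 := Nat.div_add_mod l1.1 k
    have d2 := Nat.div_add_mod l2.1 k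
    have e3 : k * (l1.1 / k) = k * (l2.1 / k) := by rw [e2]
    omega
  have hmemP : ∀ x ∈ P, ∃ i j, x = Pt i j := by
    intro x hx
    rw [hPdef, Finset.mem_image] at hx
    obtain ⟨l, _, rfl⟩ := hx
    exact ⟨_, _, rfl⟩
  refine ⟨P, hPcard, ?_⟩
  -- main indexing argument
  intro t ht htk 𝓑 h𝓑 ht𝓑 hquery
  have hα0 : (0:ℝ) < α := lt_of_lt_of_le one_pos hα1
  have ht1 : (1:ℝ) ≤ t := Nat.one_le_cast.mpr ht
  have htα : (t:ℝ) * α ≤ k := by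
    have h := mul_le_mul_of_nonneg_right htk hα0.le
    rwa [div_mul_cancel₀ _ (ne_of_gt hα0)] at h
  have hαk : α ≤ (k:ℝ) := by nlinarith
  set a := ⌈α⌉₊ with hadef
  have ha0 : 0 < a := Nat.ceil_pos.mpr hα0
  have ha1 : 1 ≤ a := ha0
  have haα : α ≤ (a:ℝ) := Nat.le_ceil α
  have haα2 : (a:ℝ) < α + 1 := Nat.ceil_lt_add_one hα0.le
  have haB : a ≤ B := Nat.ceil_le.mpr hαB
  have hak : a ≤ k := Nat.ceil_le.mpr hαk
  set r := (k-1) * u with hrdef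
  have hrR : ((r:ℕ):ℝ) = ((k:ℝ)-1)*(8*(p:ℝ)) := by
    rw [hrdef, hu]
    push_cast [Nat.cast_sub (show 1 ≤ k by omega)]
    ring
  have hr0 : 0 < r := Nat.mul_pos (by omega) hu0
  have hpR : (1:ℝ) ≤ p := by exact_mod_cast hp1
  -- distance formula
  have hdQP : ∀ (g : Fin k → Fin (m+1)) (i : Fin k) (j : Fin (m+1)),
      hammingDist (Tr (HQ k (fun i' => cw (g i')))) (Pt i j)
        = (k-1)*u + 2 * hammingDist (cw (g i)) (cw j) := by
    intro g i j
    show hammingDist (Tr (HQ k (fun i' => cw (g i')))) (Tr (HPt k i (cw j))) = _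
    rw [hTr]
    exact hd_HQ_HPt _ i _
  set qf : (Fin k → Fin m) → (Fin d → Bool) := fun f => Tr (HQ k (fun i => cw ((f i).castSucc))) with hqfdef
  set Af : (Fin k → Fin m) → Finset (Fin d → Bool) :=
    fun f => Finset.univ.image (fun i => Pt i ((f i).castSucc)) with hAfdef
  have hmemAf : ∀ f x, x ∈ Af f ↔ ∃ i, x = Pt i ((f i).castSucc) := by
    intro f x
    rw [hAfdef]
    constructor
    · intro hx
      obtain ⟨i, _, hi⟩ := Finset.mem_image.mp hx
      exact ⟨i, hi.symm⟩
    · rintro ⟨i, rfl⟩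
      exact Finset.mem_image.mpr ⟨i, Finset.mem_univ _, rfl⟩
  have hdistf : ∀ (f : Fin k → Fin m) (i : Fin k) (j : Fin (m+1)),
      hammingDist (qf f) (Pt i j) = (k-1)*u + 2*hammingDist (cw ((f i).castSucc)) (cw j) :=
    fun f i j => hdQP (fun i => (f i).castSucc) i j
  have hAfsub : ∀ f, Af f ⊆ P := by
    intro f x hx
    obtain ⟨i, rfl⟩ := (hmemAf f x).mp hx
    exact hPtmemP i _ (by simpa using (f i).2)
  have hAfcard : ∀ f, (Af f).card = k := by
    intro f
    rw [hAfdef]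
    rw [Finset.card_image_of_injective _ ?_, Finset.card_univ, Fintype.card_fin]
    intro i1 i2 h
    exact (hPtinj _ _ _ _ h).1
  have hAfdist : ∀ f, ∀ x ∈ Af f, hammingDist (qf f) x = r := by
    intro f x hx
    obtain ⟨i, rfl⟩ := (hmemAf f x).mp hx
    rw [hdistf f i, hammingDist_self]
    omega
  have hPdist : ∀ f, ∀ y ∈ P, r ≤ hammingDist (qf f) y := by
    intro f y hy
    obtain ⟨i, j, rfl⟩ := hmemP y hy
    rw [hdistf f i j]
    omega
  have hrad : ∀ f, IsHammingKNNRadius P k (qf f) r := by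
    intro f
    refine ⟨Af f, hAfsub f, hAfcard f, ?_, ?_, ?_⟩
    · intro x hx y hy _
      rw [hAfdist f x hx]
      exact hPdist f y hy
    · intro x hx
      rw [hAfdist f x hx]
    · refine ⟨Pt ⟨0, by omega⟩ ((f ⟨0, by omega⟩).castSucc), ?_, ?_⟩
      · exact (hmemAf f _).mpr ⟨⟨0, by omega⟩, rfl⟩
      · exact hAfdist f _ ((hmemAf f _).mpr ⟨⟨0, by omega⟩, rfl⟩)
  -- the selection of a heavy block
  have Hsel : ∀ f : Fin k → Fin m, ∃ bX : Finset (Fin d → Bool) × Finset (Fin d → Bool),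
      bX.1 ∈ 𝓑 ∧ bX.2 ⊆ bX.1 ∧ bX.2 ⊆ Af f ∧ bX.2.card = a := by
    intro f
    obtain ⟨𝓒, h𝓒sub, h𝓒card, S, hSsub, hScard, hSdist⟩ := hquery (qf f) r (hrad f)
    have hSAf : S ⊆ Af f := by
      intro z hz
      obtain ⟨b, hb𝓒, hzb⟩ := Finset.mem_sup.mp (hSsub hz)
      have hzP : z ∈ P := (h𝓑 b (h𝓒sub hb𝓒)).1 hzb
      obtain ⟨i, j, rfl⟩ := hmemP z hzP
      by_contra hzAf
      have hjne : j ≠ (f i).castSucc := by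
        intro he
        exact hzAf ((hmemAf f _).mpr ⟨i, by rw [he]⟩)
      have hge : (k-1)*u + 2*p ≤ hammingDist (qf f) (Pt i j) := by
        rw [hdistf f i j]
        have hpd := hcwdist ((f i).castSucc) j (fun hh => hjne hh.symm)
        omega
      have hle := hSdist _ hz
      have hgeR : ((r:ℕ):ℝ) + 2*(p:ℝ) ≤ (hammingDist (qf f) (Pt i j) : ℝ) := by
        have : ((((k-1)*u + 2*p : ℕ)):ℝ) ≤ (hammingDist (qf f) (Pt i j) : ℝ) := by exact_mod_cast hge
        rw [← hrdef] at this
        push_cast at this ⊢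
        linarith
      have hlt : c * ((r:ℕ):ℝ) < ((r:ℕ):ℝ) + 2*(p:ℝ) := by
        rw [hrR]
        have hkR0 : (0:ℝ) < (k:ℝ) := by linarith
        have hrpos : (0:ℝ) < ((k:ℝ)-1)*(8*(p:ℝ)) := by nlinarith
        have h1 : c * (((k:ℝ)-1)*(8*(p:ℝ))) < (1 + 1/(4*(k:ℝ))) * (((k:ℝ)-1)*(8*(p:ℝ))) :=
          mul_lt_mul_of_pos_right hc2 hrpos
        have h2 : (1 + 1/(4*(k:ℝ))) * (((k:ℝ)-1)*(8*(p:ℝ))) ≤ ((k:ℝ)-1)*(8*(p:ℝ)) + 2*(p:ℝ) := by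
          rw [add_mul, one_mul]
          have : 1/(4*(k:ℝ)) * (((k:ℝ)-1)*(8*(p:ℝ))) = 2*(p:ℝ)*(((k:ℝ)-1)/(k:ℝ)) := by
            field_simp
            ring
          rw [this]
          have hfrac : ((k:ℝ)-1)/(k:ℝ) ≤ 1 := by
            rw [div_le_one hkR0]
            linarith
          nlinarith only [mul_le_mul_of_nonneg_left hfrac (by positivity : (0:ℝ) ≤ 2*(p:ℝ))]
        linarith
      linarith
    have hSeq : S = Af f := Finset.eq_of_subset_of_card_le hSAf (by rw [hScard, hAfcard])
    have hAfsup : Af f ⊆ 𝓒.sup id := hSeq ▸ hSsub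
    have hsum : k ≤ ∑ b ∈ 𝓒, (Af f ∩ b).card := by
      have hcover : Af f ⊆ 𝓒.biUnion (fun b => Af f ∩ b) := by
        intro z hz
        obtain ⟨b, hb, hzb⟩ := Finset.mem_sup.mp (hAfsup hz)
        exact Finset.mem_biUnion.mpr ⟨b, hb, Finset.mem_inter.mpr ⟨hz, hzb⟩⟩
      calc k = (Af f).card := (hAfcard f).symm
        _ ≤ (𝓒.biUnion (fun b => Af f ∩ b)).card := Finset.card_le_card hcover
        _ ≤ ∑ b ∈ 𝓒, (Af f ∩ b).card := Finset.card_biUnion_le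
    have hex : ∃ b ∈ 𝓒, a ≤ (Af f ∩ b).card := by
      by_contra hco
      push_neg at hco
      have hsum2 : ∑ b ∈ 𝓒, (Af f ∩ b).card ≤ 𝓒.card * (a-1) := by
        apply le_trans (Finset.sum_le_card_nsmul _ _ (a-1) ?_) (by rw [smul_eq_mul])
        intro b hb
        have := hco b hb
        omega
      have h3 : 𝓒.card * (a-1) ≤ t * (a-1) := Nat.mul_le_mul_right _ h𝓒card
      have h4 : (((t * (a-1)):ℕ):ℝ) < (k:ℝ) := by
        push_cast [Nat.cast_sub ha1]
        have h5 : (t:ℝ) * ((a:ℝ)-1) < (t:ℝ) * α := by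
          apply mul_lt_mul_of_pos_left (by linarith) (by linarith)
        linarith
      have h6 : k ≤ t * (a-1) := le_trans hsum (le_trans hsum2 h3)
      have h7 : ((k:ℕ):ℝ) ≤ (((t * (a-1)):ℕ):ℝ) := by exact_mod_cast h6
      linarith
    obtain ⟨b, hb, hba⟩ := hex
    obtain ⟨X, hXsub, hXcard⟩ := Finset.exists_subset_card_eq hba
    have hXb : X ⊆ b := hXsub.trans Finset.inter_subset_right
    have hXAf : X ⊆ Af f := hXsub.trans Finset.inter_subset_left
    exact ⟨(b, X), h𝓒sub hb, hXb, hXAf, hXcard⟩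
  choose sel hsel1 hsel2 hsel3 hsel4 using Hsel
  -- the position function
  set πpos : (Fin d → Bool) → Fin k := fun z =>
    if h : ∃ ij : Fin k × Fin (m+1), z = Pt ij.1 ij.2 then h.choose.1 else ⟨0, by omega⟩ with hπdef
  have hπ : ∀ i j, πpos (Pt i j) = i := by
    intro i j
    simp only [hπdef]
    have hexx : ∃ ij : Fin k × Fin (m+1), Pt i j = Pt ij.1 ij.2 := ⟨(i,j), rfl⟩
    rw [dif_pos hexx]
    exact (hPtinj _ _ _ _ hexx.choose_spec).1.symm
  have himg : ∀ (f : Fin k → Fin m) (X : Finset (Fin d → Bool)), X ⊆ Af f →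
      ∀ i : Fin k, (i ∈ X.image πpos ↔ Pt i ((f i).castSucc) ∈ X) := by
    intro f X hX i
    constructor
    · intro hi
      obtain ⟨z, hz, hπz⟩ := Finset.mem_image.mp hi
      obtain ⟨i', rfl⟩ := (hmemAf f z).mp (hX hz)
      rw [hπ] at hπz
      subst hπz
      exact hz
    · intro hz
      exact Finset.mem_image.mpr ⟨_, hz, hπ i _⟩
  have himgcard : ∀ (f : Fin k → Fin m) (X : Finset (Fin d → Bool)), X ⊆ Af f →
      (X.image πpos).card = X.card := by
    intro f X hX
    apply Finset.card_image_of_injOn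
    intro z1 hz1 z2 hz2 hzz
    obtain ⟨i1, rfl⟩ := (hmemAf f z1).mp (hX hz1)
    obtain ⟨i2, rfl⟩ := (hmemAf f z2).mp (hX hz2)
    rw [hπ, hπ] at hzz
    rw [hzz]
  set f0 : Fin m := ⟨0, by omega⟩ with hf0
  set Gs : Finset (Fin d → Bool) → Finset (Fin k → Fin m) :=
    fun X => Fintype.piFinset (fun i => if i ∈ X.image πpos then {f0} else Finset.univ) with hGsdef
  set Tgt := 𝓑.sigma (fun b => ((b.powersetCard a).filter
      (fun X => (X.image πpos).card = a)).sigma (fun X => Gs X)) with hTgtdef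
  set Ψ : (Fin k → Fin m) → ((_ : Finset (Fin d → Bool)) × (_ : Finset (Fin d → Bool)) × (Fin k → Fin m)) :=
    fun f => ⟨(sel f).1, (sel f).2, fun i => if i ∈ ((sel f).2.image πpos) then f0 else f i⟩ with hΨdef
  have hΨmem : ∀ f, Ψ f ∈ Tgt := by
    intro f
    simp only [hΨdef, hTgtdef]
    refine Finset.mem_sigma.mpr ⟨hsel1 f, Finset.mem_sigma.mpr ⟨?_, ?_⟩⟩
    · rw [Finset.mem_filter]
      refine ⟨Finset.mem_powersetCard.mpr ⟨hsel2 f, hsel4 f⟩, ?_⟩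
      rw [himgcard f _ (hsel3 f), hsel4 f]
    · rw [hGsdef]
      apply Fintype.mem_piFinset.mpr
      intro i
      by_cases hi : i ∈ ((sel f).2.image πpos)
      · simp [hi]
      · simp [hi]
  have hΨinj : Set.InjOn Ψ (Finset.univ : Finset (Fin k → Fin m)) := by
    intro f1 _ f2 _ heq
    have hbeq : (sel f1).1 = (sel f2).1 := congrArg (fun z => z.1) heq
    have hXeq : (sel f1).2 = (sel f2).2 := congrArg (fun z => z.2.1) heq
    have hgeq : (fun i => if i ∈ ((sel f1).2.image πpos) then f0 else f1 i)
        = (fun i => if i ∈ ((sel f2).2.image πpos) then f0 else f2 i) := congrArg (fun z => z.2.2) heq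
    funext i
    have hgi := congrFun hgeq i
    by_cases h1 : Pt i ((f1 i).castSucc) ∈ (sel f1).2
    · have h2 : Pt i ((f1 i).castSucc) ∈ (sel f2).2 := hXeq ▸ h1
      obtain ⟨i', he⟩ := (hmemAf f2 _).mp (hsel3 f2 h2)
      obtain ⟨hii, hjj⟩ := hPtinj _ _ _ _ he
      subst hii
      exact Fin.castSucc_inj.mp hjj
    · by_cases h2 : Pt i ((f2 i).castSucc) ∈ (sel f2).2
      · obtain ⟨i', he⟩ := (hmemAf f1 _).mp (hsel3 f1 (hXeq ▸ h2))
        obtain ⟨hii, hjj⟩ := hPtinj _ _ _ _ he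
        subst hii
        have hf : f1 i = f2 i := (Fin.castSucc_inj.mp hjj).symm
        exfalso
        apply h1
        rw [hf, hXeq]
        exact h2
      · have hn1 : i ∉ ((sel f1).2.image πpos) := fun hh => h1 ((himg f1 _ (hsel3 f1) i).mp hh)
        have hn2 : i ∉ ((sel f2).2.image πpos) := fun hh => h2 ((himg f2 _ (hsel3 f2) i).mp hh)
        rw [if_neg hn1, if_neg hn2] at hgi
        exact hgi
  -- counting
  have hm0R : 0 < m := by omega
  have hcount : m ^ k ≤ 𝓑.card * (B.choose a * m ^ (k - a)) := by
    have h1 : (Finset.univ : Finset (Fin k → Fin m)).card ≤ Tgt.card :=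
      Finset.card_le_card_of_injOn Ψ (fun f _ => hΨmem f) hΨinj
    have h2 : (Finset.univ : Finset (Fin k → Fin m)).card = m ^ k := by
      rw [Finset.card_univ]
      simp [Fintype.card_fun]
    have h3 : Tgt.card ≤ 𝓑.card * (B.choose a * m ^ (k-a)) := by
      rw [hTgtdef, Finset.card_sigma]
      refine le_trans (Finset.sum_le_card_nsmul _ _ (B.choose a * m^(k-a)) ?_) (by rw [smul_eq_mul])
      intro b hb
      rw [Finset.card_sigma]
      have hGscard : ∀ X ∈ (b.powersetCard a).filter (fun X => (X.image πpos).card = a),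
          (Gs X).card ≤ m^(k-a) := by
        intro X hX
        rw [Finset.mem_filter] at hX
        rw [hGsdef]
        rw [Fintype.card_piFinset]
        set Spos := X.image πpos with hSpos
        have hSsubu : Spos ⊆ Finset.univ := Finset.subset_univ _
        rw [← Finset.prod_sdiff hSsubu]
        have hprod1 : ∏ i ∈ Spos, (if i ∈ Spos then ({f0}:Finset (Fin m)) else Finset.univ).card = 1 := by
          apply Finset.prod_eq_one
          intro i hi
          rw [if_pos hi, Finset.card_singleton]
        have hprod2 : ∏ i ∈ Finset.univ \ Spos, (if i ∈ Spos then ({f0}:Finset (Fin m)) else Finset.univ).card = m ^ (k-a) := by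
          have : ∀ i ∈ Finset.univ \ Spos, (if i ∈ Spos then ({f0}:Finset (Fin m)) else Finset.univ).card = m := by
            intro i hi
            rw [if_neg (Finset.mem_sdiff.mp hi).2, Finset.card_univ, Fintype.card_fin]
          rw [Finset.prod_congr rfl this, Finset.prod_const]
          congr 1
          rw [Finset.card_sdiff_of_subset hSsubu, Finset.card_univ, Fintype.card_fin, hX.2]
        rw [hprod1, hprod2, mul_one]
      refine le_trans (Finset.sum_le_card_nsmul _ _ (m^(k-a)) hGscard) ?_
      rw [smul_eq_mul]
      apply Nat.mul_le_mul_right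
      calc ((b.powersetCard a).filter (fun X => (X.image πpos).card = a)).card
          ≤ (b.powersetCard a).card := Finset.card_filter_le _ _
        _ = (b.card).choose a := Finset.card_powersetCard _ _
        _ ≤ B.choose a := Nat.choose_le_choose a (h𝓑 b hb).2
    omega
  have hma : m ^ a ≤ 𝓑.card * B.choose a := by
    have hpow : m^k = m^a * m^(k-a) := by
      rw [← pow_add]
      congr 1
      omega
    have h8 : m^a * m^(k-a) ≤ (𝓑.card * B.choose a) * m^(k-a) := by
      rw [hpow] at hcount
      calc m^a * m^(k-a) ≤ 𝓑.card * (B.choose a * m^(k-a)) := hcount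
        _ = (𝓑.card * B.choose a) * m^(k-a) := by ring
    exact Nat.le_of_mul_le_mul_right h8 (Nat.pow_pos hm0R)
  -- real endgame
  set x := (n:ℝ) * α / ((k:ℝ) * (B:ℝ)) with hxdef
  have hx0 : 0 ≤ x := by positivity
  rcases le_or_gt ((1 / (2 * Real.exp 1)) * Real.sqrt x) 1 with hb1 | hb1
  · have h1 : ((1 / (2 * Real.exp 1)) * Real.sqrt x) ^ α ≤ 1 :=
      Real.rpow_le_one (by positivity) hb1 (by linarith)
    have h2 : (1:ℝ) ≤ (𝓑.card:ℝ) := by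
      have : 1 ≤ 𝓑.card := le_trans ht ht𝓑
      exact_mod_cast this
    exact le_trans h1 h2
  · have he := Real.exp_pos 1
    have hCB0 : (0:ℝ) < (B.choose a:ℝ) := by exact_mod_cast Nat.choose_pos haB
    have hNge : ((m:ℝ))^a / (B.choose a:ℝ) ≤ (𝓑.card:ℝ) := by
      rw [div_le_iff₀ hCB0]
      exact_mod_cast hma
    have hchoose := choose_le_exp_pow B a ha1
    set y := (m:ℝ) * (a:ℝ) / (Real.exp 1 * (B:ℝ)) with hydef
    have hmR0 : (0:ℝ) < m := by exact_mod_cast hm0R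
    have haR0 : (0:ℝ) < a := by exact_mod_cast ha0
    have hBR0 : (0:ℝ) < B := by exact_mod_cast hB
    have hy0 : 0 < y := by positivity
    have hyN : y ^ a ≤ (𝓑.card:ℝ) := by
      refine le_trans ?_ hNge
      have hrwy : y = (m:ℝ) / (Real.exp 1 * (B:ℝ) / (a:ℝ)) := by
        rw [hydef]
        field_simp
      rw [hrwy, div_pow, div_le_div_iff₀ (by positivity) hCB0]
      exact mul_le_mul_of_nonneg_left hchoose (by positivity)
    have hby : ((1 / (2 * Real.exp 1)) * Real.sqrt x) ≤ y := by
      have hkR0 : (0:ℝ) < k := by linarith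
      have hmn2k : (n:ℝ)/(2*(k:ℝ)) ≤ (m:ℝ) := by
        have h1 : (n:ℝ) < (k:ℝ)*((m:ℝ)+1) := by exact_mod_cast hnkm
        have hnk2 : (2*(k:ℝ)) ≤ (n:ℝ) := by exact_mod_cast hkn
        rw [div_le_iff₀ (by positivity)]
        nlinarith
      have hxy : x / (2*Real.exp 1) ≤ y := by
        have hrwx : x / (2*Real.exp 1) = ((n:ℝ)/(2*(k:ℝ))) * α / (Real.exp 1 * (B:ℝ)) := by
          rw [hxdef]
          field_simp
        rw [hrwx, hydef]
        gcongr
      have hsx : Real.sqrt x ≤ x := by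
        have hsq : Real.sqrt x * Real.sqrt x = x := Real.mul_self_sqrt hx0
        have h2e : (1:ℝ) < 1 / (2 * Real.exp 1) * Real.sqrt x := hb1
        have hee : (2:ℝ) ≤ Real.exp 1 := by
          have := Real.add_one_le_exp (1:ℝ)
          linarith
        have h2e' : 2*Real.exp 1 < Real.sqrt x := by
          have hdd : (1:ℝ) < Real.sqrt x / (2*Real.exp 1) := by
            have : 1 / (2 * Real.exp 1) * Real.sqrt x = Real.sqrt x / (2*Real.exp 1) := by ring
            linarith [this ▸ h2e]
          have := (lt_div_iff₀ (by positivity : (0:ℝ) < 2*Real.exp 1)).mp hdd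
          linarith
        have hs1 : (1:ℝ) ≤ Real.sqrt x := by linarith
        nlinarith [Real.sqrt_nonneg x]
      calc (1 / (2 * Real.exp 1)) * Real.sqrt x = Real.sqrt x / (2*Real.exp 1) := by ring
        _ ≤ x / (2*Real.exp 1) := by gcongr
        _ ≤ y := hxy
    have hbase0 : (0:ℝ) ≤ (1 / (2 * Real.exp 1)) * Real.sqrt x := by positivity
    calc ((1 / (2 * Real.exp 1)) * Real.sqrt x) ^ α
        ≤ ((1 / (2 * Real.exp 1)) * Real.sqrt x) ^ ((a:ℕ):ℝ) :=
          Real.rpow_le_rpow_of_exponent_le hb1.le haα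
      _ = ((1 / (2 * Real.exp 1)) * Real.sqrt x) ^ (a:ℕ) := Real.rpow_natCast _ _
      _ ≤ y ^ a := pow_le_pow_left₀ hbase0 hby a
      _ ≤ (𝓑.card:ℝ) := hyN
end

section
/- Let M be a metric space, P a finite set of points in M with |P| = n, and k an integer with 1 ≤ k ≤ n. Let q ∈ M and let r be the k-nearest-neighbor radius of q in P. Let p* ∈ P satisfy dist(q, p*) ≤ dist(q, y) for all y ∈ P (p* is a nearest neighbor of q in P). Let S ⊆ P with |S| = k be a set of k nearest neighbors of p* in P, i.e., dist(p*, x) ≤ dist(p*, y) for all x ∈ S and y ∈ P∖S. Then dist(q, x) ≤ 3·r for every x ∈ S. -/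
/-- the `k` nearest neighbors of the nearest neighbor of `q`
are all `3`-approximate `k`-nearest neighbors of `q`. -/
theorem three_approx_via_nearest_neighbor
    {M : Type*} [MetricSpace M] (P : Finset M) (n k : ℕ)
    (hP : P.card = n) (hk1 : 1 ≤ k) (hkn : k ≤ n)
    (q : M) (r : ℝ) (hr : IsKNNRadius P k q r)
    (pstar : M) (hpstar : pstar ∈ P)
    (hnear : ∀ y ∈ P, dist q pstar ≤ dist q y)
    (S : Finset M) (hSP : S ⊆ P) (hScard : S.card = k)
    (hSnn : ∀ x ∈ S, ∀ y ∈ P, y ∉ S → dist pstar x ≤ dist pstar y) :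
    ∀ x ∈ S, dist q x ≤ 3 * r := by
  obtain ⟨T, hTP, hTcard, hTnn, hTle, x0, hx0T, hx0r⟩ := hr
  have hx0P : x0 ∈ P := hTP hx0T
  have hqp : dist q pstar ≤ r := (hnear x0 hx0P).trans hx0r.le
  intro x hxS
  have key : dist pstar x ≤ 2 * r := by
    by_cases hxT : x ∈ T
    · calc dist pstar x ≤ dist pstar q + dist q x := dist_triangle _ _ _
        _ ≤ r + r := by
          have := hTle x hxT
          rw [dist_comm]; linarith
        _ = 2 * r := by ring
    · have : ¬ T ⊆ S := by
        intro hTS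
        exact hxT (Finset.eq_of_subset_of_card_le hTS (by omega) ▸ hxS)
      obtain ⟨y, hyT, hyS⟩ := Finset.not_subset.mp this
      have h1 : dist pstar x ≤ dist pstar y := hSnn x hxS y (hTP hyT) hyS
      have h2 : dist q y ≤ r := hTle y hyT
      calc dist pstar x ≤ dist pstar y := h1
        _ ≤ dist pstar q + dist q y := dist_triangle _ _ _
        _ ≤ r + r := by rw [dist_comm]; linarith
        _ = 2 * r := by ring
  calc dist q x ≤ dist q pstar + dist pstar x := dist_triangle _ _ _
    _ ≤ 3 * r := by linarith
end

section
/- Let M be a metric space, P a finite set of points in M with |P| = n, and k, B positive integers with k ≤ n. Then there exists a family 𝓑 of at most n·⌈k/B⌉ subsets of P, each of cardinality at most B, such that for every q ∈ M there exist a subfamily 𝓒 ⊆ 𝓑 with |𝓒| ≤ ⌈k/B⌉ and a set S ⊆ ⋃𝓒 with |S| = k such that dist(q, x) ≤ 3·r for all x ∈ S, where r is the k-nearest-neighbor radius of q in P. -/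

-- existence of k-NN set
lemma exists_knn {M : Type*} [MetricSpace M] [DecidableEq M] (P : Finset M) (k : ℕ)
    (hk : k ≤ P.card) (q : M) :
    ∃ T, T ⊆ P ∧ T.card = k ∧ ∀ x ∈ T, ∀ y ∈ P, y ∉ T → dist q x ≤ dist q y := by
  obtain ⟨T, hT, hmin⟩ := Finset.exists_min_image (P.powersetCard k)
    (fun T => ∑ x ∈ T, dist q x) (Finset.powersetCard_nonempty.2 hk)
  rw [Finset.mem_powersetCard] at hT
  refine ⟨T, hT.1, hT.2, ?_⟩
  by_contra h
  push_neg at h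
  obtain ⟨x, hx, y, hy, hyT, hlt⟩ := h
  have hyx : y ∉ T.erase x := fun h => hyT (Finset.mem_of_mem_erase h)
  have hT' : insert y (T.erase x) ∈ P.powersetCard k := by
    rw [Finset.mem_powersetCard]
    constructor
    · intro z hz
      rcases Finset.mem_insert.1 hz with rfl | hz
      · exact hy
      · exact hT.1 (Finset.mem_of_mem_erase hz)
    · have hc : 0 < T.card := Finset.card_pos.2 ⟨x, hx⟩
      rw [hT.2] at hc
      rw [Finset.card_insert_of_notMem hyx, Finset.card_erase_of_mem hx, hT.2]
      omega
  have := hmin _ hT'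
  rw [Finset.sum_insert hyx] at this
  have hsum : ∑ z ∈ T.erase x, dist q z + dist q x = ∑ z ∈ T, dist q z :=
    Finset.sum_erase_add T _ hx
  linarith

lemma exists_blocks {M : Type*} [DecidableEq M] (B : ℕ) (hB : 0 < B) :
    ∀ (T : Finset M), ∃ 𝓒 : Finset (Finset M),
      𝓒.card ≤ ⌈(T.card : ℝ) / (B : ℝ)⌉₊ ∧ (∀ b ∈ 𝓒, b ⊆ T ∧ b.card ≤ B) ∧
      T ⊆ 𝓒.sup id := by
  intro T
  induction T using Finset.strongInduction with
  | _ T ih =>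
    rcases le_or_gt T.card B with hle | hlt
    · rcases T.eq_empty_or_nonempty with rfl | hne
      · exact ⟨∅, by simp, by simp, by simp⟩
      · refine ⟨{T}, ?_, by simp [hle], ?_⟩
        · have : (0 : ℝ) < (T.card : ℝ) / (B : ℝ) := by
            apply div_pos <;> [exact_mod_cast Finset.card_pos.2 hne; exact_mod_cast hB]
          simpa using Nat.ceil_pos.2 this
        · intro x hx
          exact Finset.le_sup (f := id) (Finset.mem_singleton_self T) hx
    · obtain ⟨b, hbT, hbcard⟩ := Finset.exists_subset_card_eq (s := T) hlt.le
      have hsub : T \ b ⊂ T := by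
        apply Finset.sdiff_ssubset hbT
        rw [← Finset.card_pos, hbcard]; exact hB
      obtain ⟨𝓒', h1, h2, h3⟩ := ih _ hsub
      refine ⟨insert b 𝓒', ?_, ?_, ?_⟩
      · have hcard : (T \ b).card = T.card - B := by
          rw [Finset.card_sdiff_of_subset hbT, hbcard]
        have hceil : ⌈((T \ b).card : ℝ) / (B : ℝ)⌉₊ + 1 = ⌈(T.card : ℝ) / (B : ℝ)⌉₊ := by
          rw [← Nat.ceil_add_one (by positivity)]
          congr 1
          rw [hcard]
          have : ((T.card - B : ℕ) : ℝ) = (T.card : ℝ) - (B : ℝ) := by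
            push_cast [Nat.cast_sub hlt.le]; ring
          rw [this]
          field_simp
          ring
        calc (insert b 𝓒').card ≤ 𝓒'.card + 1 := Finset.card_insert_le _ _
          _ ≤ ⌈((T \ b).card : ℝ) / (B : ℝ)⌉₊ + 1 := by omega
          _ = _ := hceil
      · intro c hc
        rcases Finset.mem_insert.1 hc with rfl | hc
        · exact ⟨hbT, hbcard.le⟩
        · exact ⟨(h2 c hc).1.trans (Finset.sdiff_subset), (h2 c hc).2⟩
      · intro x hx
        rw [Finset.sup_insert]
        by_cases hxb : x ∈ b
        · exact Finset.mem_union_left _ hxb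
        · exact Finset.mem_union_right _ (h3 (Finset.mem_sdiff.2 ⟨hx, hxb⟩))

/-- Theorem 2, general metric indexing scheme: for any `n`
points in a metric space there is a family of at most `n·⌈k/B⌉` blocks of
size at most `B` answering `3`-approximate `k`-nearest-neighbor queries in
`⌈k/B⌉` I/Os. -/
theorem general_metric_three_approx_indexing_scheme
    {M : Type*} [MetricSpace M] [DecidableEq M] (P : Finset M) (n k B : ℕ)
    (hP : P.card = n) (hn : 0 < n) (hk : 0 < k) (hB : 0 < B) (hkn : k ≤ n) :
    ∃ 𝓑 : Finset (Finset M),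
      𝓑.card ≤ n * ⌈(k : ℝ) / (B : ℝ)⌉₊ ∧
      (∀ b ∈ 𝓑, b ⊆ P ∧ b.card ≤ B) ∧
      ∀ q : M, ∀ r : ℝ, IsKNNRadius P k q r →
        ∃ 𝓒 ⊆ 𝓑, 𝓒.card ≤ ⌈(k : ℝ) / (B : ℝ)⌉₊ ∧
          ∃ S ⊆ 𝓒.sup id, S.card = k ∧ ∀ x ∈ S, dist q x ≤ 3 * r := by
  have hkP : k ≤ P.card := hP ▸ hkn
  choose Tf hTsub hTcard hTord using fun p : M => exists_knn P k hkP p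
  choose Cf hCcard hCblk hCcov using fun p : M => exists_blocks B hB (Tf p)
  have hCcard' : ∀ p : M, (Cf p).card ≤ ⌈(k : ℝ) / (B : ℝ)⌉₊ := by
    intro p; have := hCcard p; rwa [hTcard p] at this
  refine ⟨P.biUnion Cf, ?_, ?_, ?_⟩
  · calc (P.biUnion Cf).card ≤ ∑ p ∈ P, (Cf p).card := Finset.card_biUnion_le
      _ ≤ ∑ _p ∈ P, ⌈(k : ℝ) / (B : ℝ)⌉₊ := Finset.sum_le_sum fun p _ => hCcard' p
      _ = n * ⌈(k : ℝ) / (B : ℝ)⌉₊ := by rw [Finset.sum_const, smul_eq_mul, hP]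
  · intro b hb
    obtain ⟨p, _, hbp⟩ := Finset.mem_biUnion.1 hb
    exact ⟨((hCblk p b hbp).1).trans (hTsub p), (hCblk p b hbp).2⟩
  · rintro q r ⟨T, hTP, hTc, hTo, hTle, x0, hx0, hx0r⟩
    have hr : 0 ≤ r := hx0r ▸ dist_nonneg
    have hTne : T.Nonempty := Finset.card_pos.1 (hTc ▸ hk)
    obtain ⟨p, hpT⟩ := hTne
    have hqp : dist q p ≤ r := hTle p hpT
    refine ⟨Cf p, ?_, hCcard' p, Tf p, hCcov p, hTcard p, ?_⟩
    · intro b hb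
      exact Finset.mem_biUnion.2 ⟨p, hTP hpT, hb⟩
    · intro x hx
      by_cases hxT : x ∈ T
      · have := hTle x hxT; linarith
      · -- there is y ∈ T with y ∉ Tf p
        have hy : ∃ y ∈ T, y ∉ Tf p := by
          by_contra h
          push_neg at h
          have : T = Tf p := Finset.eq_of_subset_of_card_le h
            (by rw [hTcard p, hTc])
          exact hxT (this ▸ hx)
        obtain ⟨y, hyT, hyTf⟩ := hy
        have h1 : dist p x ≤ dist p y := hTord p x hx y (hTP hyT) hyTf
        have h2 : dist p y ≤ dist p q + dist q y := dist_triangle p q y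
        have h3 : dist q y ≤ r := hTle y hyT
        have h4 : dist q x ≤ dist q p + dist p x := dist_triangle q p x
        have h5 : dist p q = dist q p := dist_comm p q
        linarith
end
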